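/- arXiv:2307.13324 — 7 statements merged into one kernel-verified Lean document; each statement's English description precedes it below -/
import Mathlib

section
/- Let A be an n×n complex matrix of the block form with first 2×2 block [[0, α₁₂],[α, 0]], first-row tail entries α₁₃,…,α₁ₙ; second-row tail zero; entries α₃₂,…,αₙ₂ in the second column below, zeros in the first column below, and lower-right (n−2)×(n−2) block Â. Let à be the (n−1)×(n−1) matrix with (1,1)-entry α·α₁₂, first row (α·α₁₃,…,α·α₁ₙ), first column (α₃₂,…,αₙ₂)ᵀ, and lower-right block Â. Then det(diag(x₁,…,xₙ) − A) = det(diag(x₁x₂, x₃,…,xₙ) − Ã) for all x₁,…,xₙ ∈ ℂ. -/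
open Matrix

/-- Reindexing equivalence used in the vertex-reduction identity. -/
def stmt7Equiv (κ : Type) : Unit ⊕ (Unit ⊕ κ) ≃ (Fin 2) ⊕ κ where
  toFun := Sum.elim (fun _ => Sum.inl 0) (Sum.elim (fun _ => Sum.inl 1) Sum.inr)
  invFun := Sum.elim (fun i => if i = 0 then Sum.inl () else Sum.inr (Sum.inl ()))
    (fun k => Sum.inr (Sum.inr k))
  left_inv := by rintro ((_|_)|(_|k)) <;> simp
  right_inv := by
    rintro (i|k)
    · fin_cases i <;> simp
    · simp

section aux
variable {κ : Type} [Fintype κ] [DecidableEq κ]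
    (α α₁₂ : ℂ) (ρ γ : κ → ℂ) (Ahat : Matrix κ κ ℂ)
    (x₁ x₂ : ℂ) (x : κ → ℂ)

noncomputable def stmt7D : Matrix κ κ ℂ := Matrix.diagonal x - Ahat

noncomputable def stmt7N : Matrix (Unit ⊕ κ) (Unit ⊕ κ) ℂ :=
  Matrix.fromBlocks (Matrix.of fun _ _ : Unit => -α₁₂) (Matrix.of fun _ j => -ρ j)
    (Matrix.of fun i _ => -γ i) (stmt7D Ahat x)

noncomputable def stmt7M : Matrix ((Fin 2) ⊕ κ) ((Fin 2) ⊕ κ) ℂ :=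
  Matrix.diagonal (Sum.elim (fun i : Fin 2 => if i = 0 then x₁ else x₂) x) -
        Matrix.fromBlocks
          (Matrix.of (fun i j : Fin 2 =>
            if i = 0 ∧ j = 1 then α₁₂ else if i = 1 ∧ j = 0 then α else 0))
          (Matrix.of (fun (i : Fin 2) (j : κ) => if i = 0 then ρ j else 0))
          (Matrix.of (fun (i : κ) (j : Fin 2) => if j = 1 then γ i else 0))
          Ahat

noncomputable def stmt7R : Matrix (Unit ⊕ κ) (Unit ⊕ κ) ℂ :=
  Matrix.diagonal (Sum.elim (fun _ : Unit => x₁ * x₂) x) -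
        Matrix.fromBlocks
          (Matrix.of (fun _ _ : Unit => α * α₁₂))
          (Matrix.of (fun (_ : Unit) (j : κ) => α * ρ j))
          (Matrix.of (fun (i : κ) (_ : Unit) => γ i))
          Ahat

set_option maxHeartbeats 1000000 in
theorem stmt7_lhs : (stmt7M α α₁₂ ρ γ Ahat x₁ x₂ x).det =
    x₁ * x₂ * (stmt7D Ahat x).det + α * (stmt7N α₁₂ ρ γ Ahat x).det := by
  classical
  set M := stmt7M α α₁₂ ρ γ Ahat x₁ x₂ x with hMdef
  set D := stmt7D Ahat x with hDdef
  set N := stmt7N α₁₂ ρ γ Ahat x with hNdef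
  set e0 : ((Fin 2) ⊕ κ) → ℂ := Pi.single (Sum.inl 0) 1 with he0
  set e1 : ((Fin 2) ⊕ κ) → ℂ := Pi.single (Sum.inl 1) 1 with he1
  set w : ((Fin 2) ⊕ κ) → ℂ :=
    Sum.elim (fun i : Fin 2 => if i = 0 then 0 else -α₁₂) (fun j => -ρ j) with hw
  -- decompose row (inl 1)
  have hM : M = Matrix.updateRow M (Sum.inl 1) (x₂ • e1 + (-α) • e0) := by
    ext i j
    rcases i with i | i <;> rcases j with j | j
    · fin_cases i <;> fin_cases j <;>
        simp [hMdef, stmt7M, Matrix.updateRow_apply, Pi.single_apply, Matrix.diagonal_apply,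
          he0, he1]
    · fin_cases i <;>
        simp [hMdef, stmt7M, Matrix.updateRow_apply, Pi.single_apply, he0, he1]
    · simp [hMdef, stmt7M, Matrix.updateRow_apply, Matrix.diagonal_apply]
    · simp [hMdef, stmt7M, Matrix.updateRow_apply, Matrix.diagonal_apply]
  set M₁ := Matrix.updateRow M (Sum.inl 1) e1 with hM₁
  set M₂ := Matrix.updateRow M (Sum.inl 1) e0 with hM₂
  have hdet : M.det = x₂ * M₁.det + (-α) * M₂.det := by
    conv_lhs => rw [hM]
    rw [Matrix.det_updateRow_add, Matrix.det_updateRow_smul, Matrix.det_updateRow_smul]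
  -- compute det M₁
  have hM₁split : M₁ = Matrix.updateRow M₁ (Sum.inl 0) (x₁ • e0 + w) := by
    ext i j
    rcases i with i | i <;> rcases j with j | j
    · fin_cases i <;> fin_cases j <;>
        simp [hM₁, hMdef, stmt7M, Matrix.updateRow_apply, Pi.single_apply,
          Matrix.diagonal_apply, he0, hw]
    · fin_cases i <;>
        simp [hM₁, hMdef, stmt7M, Matrix.updateRow_apply, Pi.single_apply, he0, hw]
    · simp [hM₁, hMdef, stmt7M, Matrix.updateRow_apply, Matrix.diagonal_apply]
    · simp [hM₁, hMdef, stmt7M, Matrix.updateRow_apply, Matrix.diagonal_apply]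
  have hP : (Matrix.updateRow M₁ (Sum.inl 0) e0) =
      Matrix.fromBlocks (1 : Matrix (Fin 2) (Fin 2) ℂ) 0
        (Matrix.of fun (i : κ) (j : Fin 2) => if j = 1 then -γ i else 0) D := by
    ext i j
    rcases i with i | i <;> rcases j with j | j
    · fin_cases i <;> fin_cases j <;>
        simp [hM₁, hMdef, stmt7M, Matrix.updateRow_apply, Pi.single_apply,
          Matrix.diagonal_apply, he0, he1, Matrix.one_apply]
    · fin_cases i <;>
        simp [hM₁, hMdef, stmt7M, Matrix.updateRow_apply, Pi.single_apply, he0, he1]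
    · rcases eq_or_ne j 1 with h | h <;>
        simp [h, hM₁, hMdef, stmt7M, Matrix.updateRow_apply, Matrix.diagonal_apply]
    · simp [hM₁, hMdef, stmt7M, hDdef, stmt7D, Matrix.updateRow_apply,
        Matrix.diagonal_apply, Matrix.sub_apply]
  have hQ : (Matrix.updateRow M₁ (Sum.inl 0) w).det = 0 := by
    apply Matrix.det_eq_zero_of_column_eq_zero (Sum.inl 0)
    intro i
    rcases i with i | i
    · fin_cases i <;>
        simp [hM₁, hMdef, stmt7M, Matrix.updateRow_apply, Pi.single_apply, hw, he1]
    · simp [hM₁, hMdef, stmt7M, Matrix.updateRow_apply, Matrix.diagonal_apply]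
  have hdetM₁ : M₁.det = x₁ * D.det := by
    conv_lhs => rw [hM₁split]
    rw [Matrix.det_updateRow_add, Matrix.det_updateRow_smul, hQ, hP,
      Matrix.det_fromBlocks_zero₁₂]
    simp
  -- compute det M₂
  have hM₂split : M₂ = Matrix.updateRow M₂ (Sum.inl 0) (x₁ • e0 + w) := by
    ext i j
    rcases i with i | i <;> rcases j with j | j
    · fin_cases i <;> fin_cases j <;>
        simp [hM₂, hMdef, stmt7M, Matrix.updateRow_apply, Pi.single_apply,
          Matrix.diagonal_apply, he0, hw]
    · fin_cases i <;>
        simp [hM₂, hMdef, stmt7M, Matrix.updateRow_apply, Pi.single_apply, he0, hw]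
    · simp [hM₂, hMdef, stmt7M, Matrix.updateRow_apply, Matrix.diagonal_apply]
    · simp [hM₂, hMdef, stmt7M, Matrix.updateRow_apply, Matrix.diagonal_apply]
  have hS : (Matrix.updateRow M₂ (Sum.inl 0) e0).det = 0 := by
    apply Matrix.det_zero_of_row_eq (i := (Sum.inl 0 : (Fin 2) ⊕ κ)) (j := Sum.inl 1)
    · simp
    · funext j
      simp [hM₂, Matrix.updateRow_apply]
  set T := Matrix.updateRow M₂ (Sum.inl 0) w with hT
  have hTdet : T.det = -N.det := by
    have hperm := Matrix.det_permute (Equiv.swap (Sum.inl 0 : (Fin 2) ⊕ κ) (Sum.inl 1)) T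
    have hsub : ((T.submatrix (Equiv.swap (Sum.inl 0 : (Fin 2) ⊕ κ) (Sum.inl 1)) id).submatrix
        (stmt7Equiv κ) (stmt7Equiv κ)) =
        Matrix.fromBlocks (1 : Matrix Unit Unit ℂ) 0 0 N := by
      ext i j
      rcases i with _ | (_ | i) <;> rcases j with _ | (_ | j) <;>
        simp [stmt7Equiv, hT, hM₂, hMdef, stmt7M, hNdef, stmt7N, hDdef, stmt7D,
          Matrix.updateRow_apply, Pi.single_apply, hw, he0, Matrix.diagonal_apply,
          Equiv.swap_apply_def, Matrix.one_apply, Matrix.sub_apply]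
    have h2 : (T.submatrix (Equiv.swap (Sum.inl 0 : (Fin 2) ⊕ κ) (Sum.inl 1)) id).det = N.det := by
      rw [← Matrix.det_submatrix_equiv_self (stmt7Equiv κ), hsub,
        Matrix.det_fromBlocks_zero₁₂]
      simp
    rw [h2] at hperm
    have hsign : (Equiv.Perm.sign (Equiv.swap (Sum.inl 0 : (Fin 2) ⊕ κ) (Sum.inl 1)) : ℂ) = -1 := by
      rw [Equiv.Perm.sign_swap (by simp)]; simp
    rw [hsign] at hperm
    linear_combination hperm
  have hdetM₂ : M₂.det = -N.det := by
    conv_lhs => rw [hM₂split]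
    rw [Matrix.det_updateRow_add, Matrix.det_updateRow_smul, hS, ← hT, hTdet]
    ring
  rw [hdet, hdetM₁, hdetM₂]
  ring

theorem stmt7_rhs : (stmt7R α α₁₂ ρ γ Ahat x₁ x₂ x).det =
    x₁ * x₂ * (stmt7D Ahat x).det + α * (stmt7N α₁₂ ρ γ Ahat x).det := by
  classical
  set R := stmt7R α α₁₂ ρ γ Ahat x₁ x₂ x with hRdef
  set D := stmt7D Ahat x with hDdef
  set N := stmt7N α₁₂ ρ γ Ahat x with hNdef
  set e0 : (Unit ⊕ κ) → ℂ := Pi.single (Sum.inl ()) 1 with he0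
  set w : (Unit ⊕ κ) → ℂ := Sum.elim (fun _ => -α₁₂) (fun j => -ρ j) with hw
  have hR : R = Matrix.updateRow R (Sum.inl ()) ((x₁ * x₂) • e0 + α • w) := by
    ext i j
    rcases i with i | i <;> rcases j with j | j <;>
      simp [hRdef, stmt7R, Matrix.updateRow_apply, Pi.single_apply, Matrix.diagonal_apply,
        he0, hw] <;> ring
  have hR₁ : Matrix.updateRow R (Sum.inl ()) e0 =
      Matrix.fromBlocks (1 : Matrix Unit Unit ℂ) 0
        (Matrix.of fun (i : κ) (_ : Unit) => -γ i) D := by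
    ext i j
    rcases i with i | i <;> rcases j with j | j <;>
      simp [hRdef, stmt7R, hDdef, stmt7D, Matrix.updateRow_apply, Pi.single_apply,
        Matrix.diagonal_apply, Matrix.one_apply, Matrix.sub_apply, he0]
  have hR₂ : Matrix.updateRow R (Sum.inl ()) w = N := by
    ext i j
    rcases i with i | i <;> rcases j with j | j <;>
      simp [hRdef, stmt7R, hNdef, stmt7N, hDdef, stmt7D, Matrix.updateRow_apply,
        Matrix.diagonal_apply, Matrix.sub_apply, hw]
  conv_lhs => rw [hR]
  rw [Matrix.det_updateRow_add, Matrix.det_updateRow_smul, Matrix.det_updateRow_smul,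
    hR₁, hR₂, Matrix.det_fromBlocks_zero₁₂]
  simp

end aux

/-- Vertex-reduction determinant identity: let `A` be the block matrix with upper-left `2×2`
block `[[0, α₁₂], [α, 0]]`, first-row tail `(α₁₃,…,α₁ₙ)`, zero second-row tail, second-column
entries `(α₃₂,…,αₙ₂)` below, zero first column below, and lower-right block `Â`; let `Ã` be
the reduced matrix with `(1,1)`-entry `α·α₁₂`, first row `(α·α₁₃,…,α·α₁ₙ)`, first column
`(α₃₂,…,αₙ₂)ᵀ` and lower-right block `Â`.  Then
`det(diag(x₁,…,xₙ) − A) = det(diag(x₁x₂, x₃,…,xₙ) − Ã)`. -/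
theorem stmt7 {κ : Type} [Fintype κ] [DecidableEq κ]
    (α α₁₂ : ℂ) (ρ : κ → ℂ) (γ : κ → ℂ) (Ahat : Matrix κ κ ℂ)
    (x₁ x₂ : ℂ) (x : κ → ℂ) :
    (Matrix.diagonal (Sum.elim (fun i : Fin 2 => if i = 0 then x₁ else x₂) x) -
        Matrix.fromBlocks
          (Matrix.of (fun i j : Fin 2 =>
            if i = 0 ∧ j = 1 then α₁₂ else if i = 1 ∧ j = 0 then α else 0))
          (Matrix.of (fun (i : Fin 2) (j : κ) => if i = 0 then ρ j else 0))
          (Matrix.of (fun (i : κ) (j : Fin 2) => if j = 1 then γ i else 0))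
          Ahat).det =
      (Matrix.diagonal (Sum.elim (fun _ : Unit => x₁ * x₂) x) -
        Matrix.fromBlocks
          (Matrix.of (fun _ _ : Unit => α * α₁₂))
          (Matrix.of (fun (_ : Unit) (j : κ) => α * ρ j))
          (Matrix.of (fun (i : κ) (_ : Unit) => γ i))
          Ahat).det := by
  have h1 := stmt7_lhs α α₁₂ ρ γ Ahat x₁ x₂ x
  have h2 := stmt7_rhs α α₁₂ ρ γ Ahat x₁ x₂ x
  rw [stmt7M] at h1
  rw [stmt7R] at h2
  rw [h1, h2]
end

section
/- Let G be a finite metric graph with all edges of length l > 0, A a G-endomorphism with nonzero eigenvalues μ₁,…,μ_m, written uniquely as μ_j = exp(α_j + i φ_j) with α_j ∈ ℝ and φ_j ∈ [0,2π). Then λ ∈ ℂ is an eigenvalue of the Dirac operator D_{Γ(A)} if and only if e^{iλl} is a nonzero eigenvalue of A; equivalently the spectrum equals {(φ_j − i α_j + 2πk)/l : 1 ≤ j ≤ m, k ∈ ℤ}. -/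
open Complex

/-- Let `G` be a finite metric graph in which every edge has length `l > 0` and let `A` be a
`G`-endomorphism (entry `A e e'` nonzero only if `e` starts where `e'` ends) whose nonzero
eigenvalues are `μ j = exp (α j + i φ j)` with `α j ∈ ℝ`, `φ j ∈ [0, 2π)`.  Then `λ ∈ ℂ` is an
eigenvalue of the Dirac operator `D_{Γ(A)}` — equivalently `det (e^{iλl}·Id − A) = 0`, i.e.
`e^{iλl}` is a (necessarily nonzero) eigenvalue of `A` — if and only if
`λ = (φ j − i α j + 2πk)/l` for some `j` and some `k ∈ ℤ`. -/
theorem stmt8 {V E : Type} [Fintype E] [DecidableEq E] (src dst : E → V)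
    (l : ℝ) (hl : 0 < l)
    (A : Matrix E E ℂ)
    (hGend : ∀ e e' : E, A e e' ≠ 0 → src e = dst e')
    (m : ℕ) (μ : Fin m → ℂ) (α φ : Fin m → ℝ)
    (hμ : ∀ j, μ j = Complex.exp (α j + Complex.I * φ j))
    (hφ : ∀ j, φ j ∈ Set.Ico (0:ℝ) (2 * Real.pi))
    (hμne : Function.Injective μ)
    (hspec : ∀ z : ℂ, (z ∈ spectrum ℂ A ∧ z ≠ 0) ↔ ∃ j, z = μ j) :
    ∀ lam : ℂ,
      (Matrix.diagonal (fun _ : E => Complex.exp (Complex.I * lam * l)) - A).det = 0 ↔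
        ∃ (j : Fin m) (k : ℤ),
          lam = ((φ j : ℂ) - Complex.I * (α j : ℂ) + 2 * Real.pi * k) / l := by
  intro lam
  have hl0 : (l : ℂ) ≠ 0 := by exact_mod_cast hl.ne'
  set z := Complex.exp (Complex.I * lam * l) with hzdef
  have hz0 : z ≠ 0 := Complex.exp_ne_zero _
  have halg : (algebraMap ℂ (Matrix E E ℂ)) z = Matrix.diagonal (fun _ : E => z) := by
    rw [Matrix.algebraMap_eq_diagonal]; rfl
  have hdet : (Matrix.diagonal (fun _ : E => z) - A).det = 0 ↔ z ∈ spectrum ℂ A := by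
    rw [spectrum.mem_iff, halg, Matrix.isUnit_iff_isUnit_det, isUnit_iff_ne_zero, not_ne_iff]
  rw [hdet]
  have h2 : z ∈ spectrum ℂ A ↔ ∃ j, z = μ j := by
    rw [← hspec z]; simp [hz0]
  rw [h2]
  constructor
  · rintro ⟨j, hj⟩
    rw [hμ j] at hj
    obtain ⟨n, hn⟩ := Complex.exp_eq_exp_iff_exists_int.mp hj
    refine ⟨j, n, ?_⟩
    rw [eq_div_iff hl0]
    linear_combination (-Complex.I) * hn + (lam * l - (φ j : ℂ) - 2 * Real.pi * n) * Complex.I_sq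
  · rintro ⟨j, n, hn⟩
    refine ⟨j, ?_⟩
    rw [hμ j, hzdef, Complex.exp_eq_exp_iff_exists_int]
    refine ⟨n, ?_⟩
    rw [eq_div_iff hl0] at hn
    linear_combination Complex.I * hn - (α j : ℂ) * Complex.I_sq
end

section
/- Let A be a block lower-triangular matrix decomposition: if a G-endomorphism A is reducible with respect to a proper nonempty edge subset Δ (A maps ℂ^Δ into itself), with A₁ the restriction to ℂ^Δ and A₂ the induced map on ℂ^{Δᶜ}, then for every λ ∈ ℂ, det(diag(exp(iλl)) − A) = det(diag(exp(iλl₁)) − A₁) · det(diag(exp(iλl₂)) − A₂), where l₁, l₂ are the restrictions of the length function. Consequently the spectrum of D_{Γ(A)} is the union of the spectra of the Dirac operators on the induced subgraphs with boundary conditions Γ(A₁) and Γ(A₂). -/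
/-- If a `G`-endomorphism `A` on a finite metric graph is reducible with respect to a proper
nonempty edge set `Δ` (i.e. `A` maps `ℂ^Δ` into itself), then its characteristic function
factors: `det(diag(e^{iλl}) − A) = det(diag(e^{iλl₁}) − A₁) · det(diag(e^{iλl₂}) − A₂)`, where
`A₁`, `A₂` are the restrictions of `A` to `ℂ^Δ` and `ℂ^{Δᶜ}`.  Consequently the spectrum of
`D_{Γ(A)}` (the zero set of the characteristic function) is the union of the spectra of the
Dirac operators on the two induced subgraphs with boundary conditions `Γ(A₁)`, `Γ(A₂)`. -/
theorem stmt9 {V E : Type} [Fintype E] [DecidableEq E] (src dst : E → V)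
    (l : E → ℝ) (hl : ∀ e, 0 < l e)
    (A : Matrix E E ℂ)
    (hGend : ∀ e e' : E, A e e' ≠ 0 → src e = dst e')
    (Δ : Finset E) (hne : Δ.Nonempty) (hproper : Δ ≠ Finset.univ)
    (hred : ∀ e' ∈ Δ, ∀ e, e ∉ Δ → A e e' = 0) :
    (∀ lam : ℂ,
      (Matrix.diagonal (fun e : E => Complex.exp (Complex.I * lam * l e)) - A).det =
        (Matrix.diagonal (fun e : {e : E // e ∈ Δ} => Complex.exp (Complex.I * lam * l e)) -
          A.submatrix Subtype.val Subtype.val).det *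
        (Matrix.diagonal (fun e : {e : E // e ∉ Δ} => Complex.exp (Complex.I * lam * l e)) -
          A.submatrix Subtype.val Subtype.val).det) ∧
    {lam : ℂ |
        (Matrix.diagonal (fun e : E => Complex.exp (Complex.I * lam * l e)) - A).det = 0} =
      {lam : ℂ |
        (Matrix.diagonal (fun e : {e : E // e ∈ Δ} => Complex.exp (Complex.I * lam * l e)) -
          A.submatrix Subtype.val Subtype.val).det = 0} ∪
      {lam : ℂ |
        (Matrix.diagonal (fun e : {e : E // e ∉ Δ} => Complex.exp (Complex.I * lam * l e)) -
          A.submatrix Subtype.val Subtype.val).det = 0} := by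
  have key : ∀ lam : ℂ,
      (Matrix.diagonal (fun e : E => Complex.exp (Complex.I * lam * l e)) - A).det =
        (Matrix.diagonal (fun e : {e : E // e ∈ Δ} => Complex.exp (Complex.I * lam * l e)) -
          A.submatrix Subtype.val Subtype.val).det *
        (Matrix.diagonal (fun e : {e : E // e ∉ Δ} => Complex.exp (Complex.I * lam * l e)) -
          A.submatrix Subtype.val Subtype.val).det := by
    intro lam
    rw [Matrix.twoBlockTriangular_det
      (Matrix.diagonal (fun e : E => Complex.exp (Complex.I * lam * l e)) - A) (· ∈ Δ)
      (fun i hi j hj => by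
        have hij : i ≠ j := fun h => hi (h ▸ hj)
        simp [Matrix.sub_apply, Matrix.diagonal_apply_ne _ hij, hred j hj i hi])]
    have h1 : (((Matrix.diagonal fun e : E => Complex.exp (Complex.I * lam * l e))
        - A).toSquareBlockProp (· ∈ Δ)) =
        ((Matrix.diagonal fun e : {e : E // e ∈ Δ} => Complex.exp (Complex.I * lam * l e)) -
          A.submatrix Subtype.val Subtype.val) := by
      ext i j
      rcases eq_or_ne i j with rfl | h
      · simp [Matrix.toSquareBlockProp]
      · have h' : (i : E) ≠ (j : E) := fun hc => h (Subtype.ext hc)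
        simp [Matrix.toSquareBlockProp, Matrix.diagonal_apply_ne _ h,
          Matrix.diagonal_apply_ne _ h']
    have h2 : (((Matrix.diagonal fun e : E => Complex.exp (Complex.I * lam * l e))
        - A).toSquareBlockProp (fun e => ¬ e ∈ Δ)) =
        ((Matrix.diagonal fun e : {e : E // e ∉ Δ} => Complex.exp (Complex.I * lam * l e)) -
          A.submatrix Subtype.val Subtype.val) := by
      ext i j
      rcases eq_or_ne i j with rfl | h
      · simp [Matrix.toSquareBlockProp]
      · have h' : (i : E) ≠ (j : E) := fun hc => h (Subtype.ext hc)
        simp [Matrix.toSquareBlockProp, Matrix.diagonal_apply_ne _ h,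
          Matrix.diagonal_apply_ne _ h']
    rw [h1, h2]
    congr!
  refine ⟨key, ?_⟩
  ext lam
  simp [key lam, mul_eq_zero]
end

section
/- For the n×n cyclic matrix A with entries A_{j+1 mod n, j} = e^{iφ_j} and lengths l_j, each zero λ_k = (Σφ_j + 2πk)/L of the characteristic function e^{iλL} − e^{iΣφ_j} has dim ker(diag(e^{iλ_k l}) − A) = 1. -/
open scoped BigOperators
open Finset
open Fin.NatCast

lemma aux_case0 (m : ℕ) (φ l : Fin (m+1) → ℝ) (lam : ℝ)
  (hcyc : Complex.exp (Complex.I * (∑ i, (φ i:ℂ)) - Complex.I * lam * (∑ i, (l i:ℂ))) = 1) :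
  Complex.exp (Complex.I * lam * l 0) *
    Complex.exp (Complex.I * (∑ t ∈ range (((0:Fin (m+1)):ℕ)), (φ (t:Fin (m+1)):ℂ))
      - Complex.I * lam * (∑ t ∈ range (((0:Fin (m+1)):ℕ)+1), (l (t:Fin (m+1)):ℂ)))
  = Complex.exp (Complex.I * φ (0-1)) *
    Complex.exp (Complex.I * (∑ t ∈ range (((0:Fin (m+1)) - 1 : Fin (m+1)) : ℕ), (φ (t:Fin (m+1)):ℂ))
      - Complex.I * lam * (∑ t ∈ range ((((0:Fin (m+1)) - 1 : Fin (m+1)) : ℕ)+1), (l (t:Fin (m+1)):ℂ))) := by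
  have h2 : (((0:Fin (m+1)) - 1 : Fin (m+1)) : ℕ) = m := by rw [Fin.coe_sub_one]; simp
  have h3 : ((0:Fin (m+1)) - 1) = ((m:ℕ) : Fin (m+1)) := by
    apply Fin.ext; rw [h2, Fin.val_cast_of_lt (Nat.lt_succ_self m)]
  have hsum : ∀ f : Fin (m+1) → ℝ, ∑ i, (f i:ℂ) = ∑ t ∈ range (m+1), (f (t:Fin (m+1)):ℂ) := by
    intro f
    rw [← Fin.sum_univ_eq_sum_range (fun t => (f (t:Fin (m+1)):ℂ)) (m+1)]
    exact Finset.sum_congr rfl (fun t _ => by rw [Fin.cast_val_eq_self])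
  rw [h2, h3, ← Complex.exp_add, ← Complex.exp_add]
  have lhs0 : Complex.I * lam * (l 0 : ℂ)
      + (Complex.I * (∑ t ∈ range (((0:Fin (m+1)):ℕ)), (φ (t:Fin (m+1)):ℂ))
        - Complex.I * lam * (∑ t ∈ range (((0:Fin (m+1)):ℕ)+1), (l (t:Fin (m+1)):ℂ))) = 0 := by
    simp only [Fin.val_zero, range_zero, sum_empty, zero_add, Finset.sum_range_one, Nat.cast_zero]
    ring
  rw [lhs0, Complex.exp_zero]
  have rhs0 : Complex.I * (φ ((m:ℕ):Fin (m+1)) : ℂ)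
      + (Complex.I * (∑ t ∈ range m, (φ (t:Fin (m+1)):ℂ))
        - Complex.I * lam * (∑ t ∈ range (m+1), (l (t:Fin (m+1)):ℂ)))
      = Complex.I * (∑ i, (φ i:ℂ)) - Complex.I * lam * (∑ i, (l i:ℂ)) := by
    rw [hsum φ, hsum l, Finset.sum_range_succ (fun t => (φ (t:Fin (m+1)):ℂ)) m]
    ring
  rw [rhs0, hcyc]

lemma aux_caseS (m : ℕ) (φ l : Fin (m+1) → ℝ) (lam : ℝ) (i : Fin (m+1)) (hi : i ≠ 0) :
  Complex.exp (Complex.I * lam * l i) *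
    Complex.exp (Complex.I * (∑ t ∈ range ((i:ℕ)), (φ (t:Fin (m+1)):ℂ))
      - Complex.I * lam * (∑ t ∈ range ((i:ℕ)+1), (l (t:Fin (m+1)):ℂ)))
  = Complex.exp (Complex.I * φ (i-1)) *
    Complex.exp (Complex.I * (∑ t ∈ range ((i - 1 : Fin (m+1)):ℕ), (φ (t:Fin (m+1)):ℂ))
      - Complex.I * lam * (∑ t ∈ range (((i - 1 : Fin (m+1)):ℕ)+1), (l (t:Fin (m+1)):ℂ))) := by
  have hvp : (i:ℕ) ≠ 0 := fun h => hi (Fin.ext h)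
  obtain ⟨q, hq⟩ := Nat.exists_eq_succ_of_ne_zero hvp
  have hqlt : q + 1 < m + 1 := by have := i.isLt; omega
  have hsub : ((i - 1 : Fin (m+1)):ℕ) = q := by
    rw [Fin.coe_sub_one, if_neg hi, hq, Nat.succ_sub_one]
  have hi1 : (i - 1 : Fin (m+1)) = ((q:ℕ) : Fin (m+1)) := by
    apply Fin.ext
    rw [hsub, Fin.val_cast_of_lt (Nat.lt_of_succ_lt hqlt)]
  have hic : ((q+1 : ℕ) : Fin (m+1)) = i := by
    apply Fin.ext
    rw [Fin.val_cast_of_lt hqlt, hq]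
  rw [hq, hsub, hi1, ← Complex.exp_add, ← Complex.exp_add]
  congr 1
  rw [Finset.sum_range_succ (fun t => (φ ((t:Fin (m+1))):ℂ)) q,
    Finset.sum_range_succ (fun t => (l ((t:Fin (m+1))):ℂ)) (q+1), hic]
  ring

lemma aux11 (m : ℕ) (φ l : Fin (m+1) → ℝ) (lam : ℝ)
    (hcyc : Complex.exp (Complex.I * (∑ i, (φ i : ℂ)) - Complex.I * lam * (∑ i, (l i : ℂ))) = 1) :
    Module.finrank ℂ
      (LinearMap.ker (Matrix.toLin'
        (Matrix.diagonal (fun j : Fin (m+1) =>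
            Complex.exp (Complex.I * (lam : ℂ) * (l j : ℂ))) -
          Matrix.of (fun i j : Fin (m+1) =>
            if i = j + 1 then Complex.exp (Complex.I * φ j) else 0)))) = 1 := by
  classical
  set d : Fin (m+1) → ℂ := fun j => Complex.exp (Complex.I * (lam : ℂ) * (l j : ℂ)) with hd
  set a : Fin (m+1) → ℂ := fun j => Complex.exp (Complex.I * (φ j : ℂ)) with ha
  set M : Matrix (Fin (m+1)) (Fin (m+1)) ℂ :=
    Matrix.diagonal d - Matrix.of (fun i j : Fin (m+1) => if i = j + 1 then a j else 0) with hM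
  have hmulvec : ∀ (x : Fin (m+1) → ℂ) (i : Fin (m+1)),
      M.mulVec x i = d i * x i - a (i-1) * x (i-1) := by
    intro x i
    simp only [hM, Matrix.mulVec, Matrix.sub_apply, dotProduct, sub_mul,
      Finset.sum_sub_distrib, Matrix.diagonal_apply, Matrix.of_apply]
    congr 1
    · rw [Finset.sum_congr rfl (fun j _ => by rw [ite_mul, zero_mul])]
      simp [Finset.sum_ite_eq]
    · have h : ∀ j : Fin (m+1), (i = j + 1) = (j = i - 1) := by
        intro j
        simp only [eq_iff_iff]
        constructor
        · intro h; simp [h]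
        · intro h; simp [h]
      simp only [h]
      rw [Finset.sum_congr rfl (fun j _ => by rw [ite_mul, zero_mul]),
        Finset.sum_ite_eq' Finset.univ (i-1) (fun j => a j * x j)]
      simp
  have hmem : ∀ x : Fin (m+1) → ℂ, x ∈ LinearMap.ker (Matrix.toLin' M) ↔
      ∀ i, d i * x i = a (i - 1) * x (i - 1) := by
    intro x
    rw [LinearMap.mem_ker, Matrix.toLin'_apply, funext_iff]
    apply forall_congr'
    intro i
    rw [hmulvec x i, Pi.zero_apply, sub_eq_zero]
  set v : Fin (m+1) → ℂ := fun j =>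
    Complex.exp (Complex.I * (∑ t ∈ range (j : ℕ), (φ ((t : Fin (m+1))) : ℂ))
      - Complex.I * (lam : ℂ) * (∑ t ∈ range ((j : ℕ) + 1), (l ((t : Fin (m+1))) : ℂ))) with hv
  have hvmem : ∀ i : Fin (m+1), d i * v i = a (i - 1) * v (i - 1) := by
    intro i
    by_cases hi : i = 0
    · subst hi
      exact aux_case0 m φ l lam hcyc
    · exact aux_caseS m φ l lam i hi
  have hvker : v ∈ LinearMap.ker (Matrix.toLin' M) := (hmem v).2 hvmem
  have hv0 : v 0 ≠ 0 := Complex.exp_ne_zero _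
  set f : LinearMap.ker (Matrix.toLin' M) →ₗ[ℂ] ℂ :=
    (LinearMap.proj 0).comp (Submodule.subtype _) with hf
  have hinj : Function.Injective f := by
    rw [injective_iff_map_eq_zero]
    intro x hx
    have hx0 : x.1 0 = 0 := hx
    have hxk := (hmem x.1).1 x.2
    have key : ∀ p : ℕ, ∀ i : Fin (m+1), (i:ℕ) = p → x.1 i = 0 := by
      intro p
      induction p using Nat.strong_induction_on with
      | _ p IH =>
        intro i hip
        by_cases h0 : i = 0
        · subst h0; exact hx0
        · have hvp : (i:ℕ) ≠ 0 := fun h => h0 (Fin.ext h)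
          have hlt : ((i - 1 : Fin (m+1)):ℕ) < p := by
            rw [Fin.coe_sub_one, if_neg h0]
            omega
          have h1 := hxk i
          rw [IH _ hlt (i-1) rfl, mul_zero] at h1
          exact (mul_eq_zero.mp h1).resolve_left (Complex.exp_ne_zero _)
    apply Subtype.ext
    funext i
    exact key (i:ℕ) i rfl
  have hsurj : Function.Surjective f := by
    intro c
    refine ⟨⟨(c / v 0) • v, Submodule.smul_mem _ _ hvker⟩, ?_⟩
    show (c / v 0) * v 0 = c
    field_simp
  rw [(LinearEquiv.ofBijective f ⟨hinj, hsurj⟩).finrank_eq, Module.finrank_self]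

/-- For the `n×n` cyclic matrix `A` with `A (j+1) j = e^{iφⱼ}` (indices mod `n`) and positive
edge lengths `lⱼ` with total length `L = Σ lⱼ`, each zero `λₖ = (Σφⱼ + 2πk)/L` of the
characteristic function `e^{iλL} − e^{iΣφⱼ}` satisfies
`dim ker (diag(e^{iλₖ lⱼ}) − A) = 1`. -/
theorem stmt11 (n : ℕ) [NeZero n] (φ : Fin n → ℝ)
    (hφ : ∀ j, φ j ∈ Set.Ico (0:ℝ) (2 * Real.pi))
    (l : Fin n → ℝ) (hl : ∀ j, 0 < l j) (k : ℤ) :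
    Module.finrank ℂ
      (LinearMap.ker (Matrix.toLin'
        (Matrix.diagonal (fun j : Fin n =>
            Complex.exp (Complex.I * ((((∑ i, φ i) + 2 * Real.pi * k) / (∑ i, l i) : ℝ) : ℂ)
              * (l j : ℂ))) -
          Matrix.of (fun i j : Fin n =>
            if i = j + 1 then Complex.exp (Complex.I * φ j) else 0)))) = 1 := by
  obtain ⟨m, rfl⟩ := Nat.exists_eq_succ_of_ne_zero (NeZero.ne n)
  apply aux11
  have hL : (0:ℝ) < ∑ i, l i := Finset.sum_pos (fun i _ => hl i) Finset.univ_nonempty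
  have hlam : (((∑ i, φ i) + 2*Real.pi*k) / (∑ i, l i)) * (∑ i, l i)
      = (∑ i, φ i) + 2*Real.pi*k := div_mul_cancel₀ _ hL.ne'
  have h1 : (∑ i, ((φ i:ℝ):ℂ)) = ((∑ i, φ i : ℝ):ℂ) := by push_cast; ring
  have h2 : (∑ i, ((l i:ℝ):ℂ)) = ((∑ i, l i : ℝ):ℂ) := by push_cast; ring
  have key : Complex.I * (∑ i, ((φ i:ℝ):ℂ))
      - Complex.I * ((((∑ i, φ i) + 2*Real.pi*k)/(∑ i, l i) : ℝ):ℂ) * (∑ i, ((l i:ℝ):ℂ))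
      = ((-k : ℤ):ℂ) * (2*(Real.pi:ℂ)*Complex.I) := by
    have h3 : ((((∑ i, φ i) + 2*Real.pi*k)/(∑ i, l i) : ℝ):ℂ) * ((∑ i, l i : ℝ):ℂ)
        = (((∑ i, φ i) + 2*Real.pi*k : ℝ):ℂ) := by
      rw [← Complex.ofReal_mul, hlam]
    rw [h1, h2, mul_assoc, h3]
    push_cast
    ring
  rw [key, Complex.exp_int_mul_two_pi_mul_I]
end

section
/- Let P be a G-permutation of a finite metric Eulerian digraph G whose trail decomposition consists of closed trails T₁,…,T_m with total lengths L₁,…,L_m. Then the spectrum of the Dirac operator D_{Γ(P)} equals {2πk/L_i : i ∈ {1,…,m}, k ∈ ℤ}, and the multiplicity of 0 is m, while for λ ≠ 0 the multiplicity of λ equals the number of indices i such that λ·L_i ∈ 2πℤ. -/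
open scoped BigOperators
set_option linter.unusedSectionVars false
set_option linter.unusedVariables false
open Function Finset

/-- The setoid on edges whose classes are the orbits (trails) of a permutation. -/
def sameCycleSetoid {E : Type} (P : Equiv.Perm E) : Setoid E :=
  ⟨P.SameCycle, ⟨fun x => Equiv.Perm.SameCycle.refl P x, fun h => h.symm, fun h h' => h.trans h'⟩⟩

/-- The total length of the closed trail (orbit of `P`) through the edge `e`. -/
noncomputable def trailLen {E : Type} (l : E → ℝ) (P : Equiv.Perm E) (e : E) : ℝ :=
  ∑ i ∈ Finset.range (Function.minimalPeriod (⇑P) e), l ((⇑P)^[i] e)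

section aux
variable {E : Type} [Fintype E] [DecidableEq E]

variable (l : E → ℝ) (P : Equiv.Perm E) (lam : ℂ)

lemma mem_pp (e : E) : e ∈ periodicPts ⇑P := by
  refine Function.mk_mem_periodicPts (n := orderOf P) (orderOf_pos P) ?_
  show (⇑P)^[orderOf P] e = e
  rw [Equiv.Perm.iterate_eq_pow, pow_orderOf_eq_one, Equiv.Perm.coe_one, id]

lemma minP_pos (e : E) : 0 < Function.minimalPeriod ⇑P e :=
  Function.minimalPeriod_pos_of_mem_periodicPts (mem_pp P e)

noncomputable def dd (e : E) : ℂ := Complex.exp (Complex.I * lam * l e)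

lemma dd_ne (e : E) : dd l lam e ≠ 0 := Complex.exp_ne_zero _

noncomputable def Dprod (n : ℕ) (e : E) : ℂ := ∏ i ∈ Finset.range n, dd l lam ((⇑P)^[i+1] e)

lemma Dprod_ne (n : ℕ) (e : E) : Dprod l P lam n e ≠ 0 :=
  Finset.prod_ne_zero_iff.2 fun _ _ => dd_ne l lam _

lemma Dprod_succ (n : ℕ) (e : E) :
    Dprod l P lam (n+1) e = Dprod l P lam n e * dd l lam ((⇑P)^[n+1] e) :=
  Finset.prod_range_succ _ _

-- shifted sum over full period equals trailLen
lemma sum_shift (e : E) :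
    ∑ i ∈ Finset.range (Function.minimalPeriod (⇑P) e), l ((⇑P)^[i+1] e) = trailLen l P e := by
  set n := Function.minimalPeriod (⇑P) e with hn
  have h1 : ∑ i ∈ Finset.range (n+1), l ((⇑P)^[i] e)
      = (∑ i ∈ Finset.range n, l ((⇑P)^[i+1] e)) + l ((⇑P)^[0] e) :=
    Finset.sum_range_succ' _ n
  have h2 : ∑ i ∈ Finset.range (n+1), l ((⇑P)^[i] e)
      = (∑ i ∈ Finset.range n, l ((⇑P)^[i] e)) + l ((⇑P)^[n] e) :=
    Finset.sum_range_succ _ n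
  have hper : (⇑P)^[n] e = e := Function.iterate_minimalPeriod
  rw [hper] at h2
  simp only [Function.iterate_zero, id] at h1
  have := h1.symm.trans h2
  unfold trailLen
  linarith

lemma Dprod_full (e : E) :
    Dprod l P lam (Function.minimalPeriod (⇑P) e) e
      = Complex.exp (Complex.I * lam * trailLen l P e) := by
  unfold Dprod dd
  rw [← Complex.exp_sum]
  congr 1
  rw [← sum_shift l P e]
  push_cast [Finset.mul_sum]
  simp [Nat.add_comm]

lemma trailLen_apply (e : E) : trailLen l P (P e) = trailLen l P e := by
  rw [← sum_shift l P e]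
  unfold trailLen
  rw [Function.minimalPeriod_apply (mem_pp P e)]
  exact Finset.sum_congr rfl fun i _ => by rw [Function.iterate_succ_apply]

lemma trailLen_iter (j : ℕ) (e : E) : trailLen l P ((⇑P)^[j] e) = trailLen l P e := by
  induction j with
  | zero => rfl
  | succ n ih => rw [Function.iterate_succ_apply', trailLen_apply, ih]

lemma trailLen_pos (hl : ∀ e, 0 < l e) (e : E) : 0 < trailLen l P e :=
  Finset.sum_pos (fun i _ => hl _) (by simp [Finset.nonempty_range_iff, (minP_pos P e).ne'])

noncomputable def Amat : Matrix E E ℂ :=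
  Matrix.diagonal (fun e => Complex.exp (Complex.I * lam * l e)) -
    Matrix.of (fun e e' => if e = P e' then (1 : ℂ) else 0)

lemma mulVec_Amat (x : E → ℂ) (e : E) :
    (Amat l P lam).mulVec x e = dd l lam e * x e - x (P.symm e) := by
  unfold Amat
  rw [Matrix.sub_mulVec]
  simp only [Pi.sub_apply]
  congr 1
  · simp [Matrix.mulVec_diagonal, dd]
  · simp only [Matrix.mulVec, dotProduct, Matrix.of_apply]
    rw [Finset.sum_eq_single (P.symm e)]
    · simp
    · intro b _ hb
      have : e ≠ P b := by
        intro h; exact hb (by rw [h, Equiv.symm_apply_apply])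
      simp [this]
    · simp

lemma K_iff (x : E → ℂ) :
    (Amat l P lam).mulVec x = 0 ↔ ∀ e, dd l lam (P e) * x (P e) = x e := by
  constructor
  · intro h e
    have he := congrFun h (P e)
    rw [mulVec_Amat] at he
    simp only [Pi.zero_apply, Equiv.symm_apply_apply] at he
    linear_combination he
  · intro h
    funext e
    rw [mulVec_Amat]
    have he := h (P.symm e)
    rw [Equiv.apply_symm_apply] at he
    simp only [Pi.zero_apply]
    linear_combination he

lemma iterK (x : E → ℂ) (hx : ∀ e, dd l lam (P e) * x (P e) = x e) :
    ∀ n (e : E), x e = Dprod l P lam n e * x ((⇑P)^[n] e) := by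
  intro n
  induction n with
  | zero => simp [Dprod]
  | succ n ih =>
    intro e
    rw [Dprod_succ]
    have h := hx ((⇑P)^[n] e)
    have h' : P ((⇑P)^[n] e) = (⇑P)^[n+1] e := (Function.iterate_succ_apply' _ _ _).symm
    rw [h'] at h
    calc x e = Dprod l P lam n e * x ((⇑P)^[n] e) := ih e
      _ = Dprod l P lam n e * (dd l lam ((⇑P)^[n+1] e) * x ((⇑P)^[n+1] e)) := by
          rw [h]
      _ = Dprod l P lam n e * dd l lam ((⇑P)^[n+1] e) * x ((⇑P)^[n+1] e) := by ring

lemma ker_vanish (x : E → ℂ) (hx : ∀ e, dd l lam (P e) * x (P e) = x e) (e : E)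
    (hne : x e ≠ 0) : Complex.exp (Complex.I * lam * trailLen l P e) = 1 := by
  have h := iterK l P lam x hx (Function.minimalPeriod ⇑P e) e
  rw [Function.iterate_minimalPeriod, Dprod_full] at h
  have h2 : (Complex.exp (Complex.I * lam * trailLen l P e) - 1) * x e = 0 := by
    linear_combination -h
  rcases mul_eq_zero.1 h2 with h3 | h3
  · linear_combination h3
  · exact absurd h3 hne

noncomputable def vr (r : E) : E → ℂ := fun e =>
  ∑ j ∈ Finset.range (Function.minimalPeriod ⇑P r),
    if (⇑P)^[j] r = e then (Dprod l P lam j r)⁻¹ else 0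

lemma vr_apply (r : E) (j : ℕ) (hj : j < Function.minimalPeriod ⇑P r) :
    vr l P lam r ((⇑P)^[j] r) = (Dprod l P lam j r)⁻¹ := by
  unfold vr
  rw [Finset.sum_eq_single j]
  · simp
  · intro b hb hbj
    have hne : (⇑P)^[b] r ≠ (⇑P)^[j] r := fun h =>
      hbj (Function.iterate_injOn_Iio_minimalPeriod (Finset.mem_range.1 hb) hj h)
    rw [if_neg hne]
  · intro h; exact absurd (Finset.mem_range.2 hj) h

lemma sameCycle_of_iterate (r e : E) (j : ℕ) (h : (⇑P)^[j] r = e) : P.SameCycle r e :=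
  ⟨j, by rw [zpow_natCast, ← Equiv.Perm.iterate_eq_pow]; exact h⟩

lemma vr_notSameCycle (r e : E) (h : ¬ P.SameCycle r e) : vr l P lam r e = 0 := by
  unfold vr
  refine Finset.sum_eq_zero fun j _ => ?_
  have hne : (⇑P)^[j] r ≠ e := fun hj => h (sameCycle_of_iterate P r e j hj)
  rw [if_neg hne]

lemma exists_iterate_of_sameCycle (r e : E) (h : P.SameCycle r e) :
    ∃ j < Function.minimalPeriod ⇑P r, (⇑P)^[j] r = e := by
  obtain ⟨i, _, hi⟩ := h.exists_pow_eq'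
  refine ⟨i % Function.minimalPeriod ⇑P r, Nat.mod_lt _ (minP_pos P r), ?_⟩
  rw [Function.iterate_mod_minimalPeriod_eq]
  rw [Equiv.Perm.iterate_eq_pow]
  exact hi

lemma vr_self (r : E) : vr l P lam r r = 1 := by
  have h := vr_apply l P lam r 0 (minP_pos P r)
  simpa [Dprod] using h

lemma vr_K (r : E) (hr : Complex.exp (Complex.I * lam * trailLen l P r) = 1) :
    ∀ e, dd l lam (P e) * vr l P lam r (P e) = vr l P lam r e := by
  intro e
  by_cases hsc : P.SameCycle r e
  · obtain ⟨j, hj, rfl⟩ := exists_iterate_of_sameCycle P r e hsc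
    set n := Function.minimalPeriod ⇑P r with hn
    have hPe : P ((⇑P)^[j] r) = (⇑P)^[j+1] r := (Function.iterate_succ_apply' _ _ _).symm
    rw [hPe, vr_apply l P lam r j hj]
    rcases Nat.lt_or_ge (j+1) n with h1 | h1
    · have h3 := dd_ne l lam ((⇑P)^[j+1] r)
      rw [vr_apply l P lam r (j+1) h1, Dprod_succ, mul_inv,
        mul_comm ((Dprod l P lam j r)⁻¹), ← mul_assoc, mul_inv_cancel₀ h3, one_mul]
    · have hj1 : j + 1 = n := le_antisymm hj h1
      have hper : (⇑P)^[j+1] r = r := by rw [hj1]; exact Function.iterate_minimalPeriod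
      rw [hper, vr_self]
      have hfull : Dprod l P lam n r = 1 := by rw [Dprod_full]; exact hr
      have h4 : Dprod l P lam j r * dd l lam ((⇑P)^[j+1] r) = 1 := by
        rw [← Dprod_succ, hj1]; exact hfull
      rw [hper] at h4
      rw [mul_one]
      exact (eq_inv_of_mul_eq_one_right h4)
  · have hePe : P.SameCycle e (P e) := ⟨1, by simp⟩
    have h1 : ¬ P.SameCycle r (P e) := fun h => hsc (h.trans hePe.symm)
    rw [vr_notSameCycle l P lam r e hsc, vr_notSameCycle l P lam r (P e) h1, mul_zero]

lemma cond_iff (e : E) :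
    Complex.exp (Complex.I * lam * trailLen l P e) = 1 ↔
      ∃ k : ℤ, lam * (trailLen l P e : ℂ) = 2 * Real.pi * k := by
  rw [Complex.exp_eq_one_iff]
  constructor
  · rintro ⟨n, hn⟩
    exact ⟨n, mul_left_cancel₀ Complex.I_ne_zero (by linear_combination hn)⟩
  · rintro ⟨k, hk⟩
    exact ⟨k, by linear_combination Complex.I * hk⟩

lemma mem_ker_iff (x : E → ℂ) :
    x ∈ LinearMap.ker (Matrix.toLin' (Amat l P lam)) ↔
      ∀ e, dd l lam (P e) * x (P e) = x e := by
  rw [LinearMap.mem_ker, Matrix.toLin'_apply]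
  exact K_iff l P lam x

lemma main_dim :
    Module.finrank ℂ (LinearMap.ker (Matrix.toLin' (Amat l P lam))) =
      Nat.card {t : Quotient (sameCycleSetoid P) //
        ∃ k : ℤ, lam * (trailLen l P (Quotient.out t) : ℂ) = 2 * Real.pi * k} := by
  classical
  set S := {t : Quotient (sameCycleSetoid P) //
        ∃ k : ℤ, lam * (trailLen l P (Quotient.out t) : ℂ) = 2 * Real.pi * k} with hS
  haveI : Finite (Quotient (sameCycleSetoid P)) := Quotient.finite _
  haveI : Finite S := Subtype.finite
  haveI : Fintype S := Fintype.ofFinite S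
  set F : LinearMap.ker (Matrix.toLin' (Amat l P lam)) →ₗ[ℂ] (S → ℂ) :=
    { toFun := fun x t => x.1 (Quotient.out t.1)
      map_add' := fun x y => rfl
      map_smul' := fun c x => rfl } with hF
  have hinj : Function.Injective F := by
    intro x y hxy
    have hsub : ∀ z : LinearMap.ker (Matrix.toLin' (Amat l P lam)),
        (∀ t : S, z.1 (Quotient.out t.1) = 0) → z = 0 := by
      intro z hz
      ext e
      have hK := (mem_ker_iff l P lam z.1).1 z.2
      set r := Quotient.out (Quotient.mk (sameCycleSetoid P) e) with hr
      have hsc : P.SameCycle r e := @Quotient.mk_out E (sameCycleSetoid P) e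
      obtain ⟨j, hj, hje⟩ := exists_iterate_of_sameCycle P r e hsc
      by_cases hgood : ∃ k : ℤ, lam * (trailLen l P r : ℂ) = 2 * Real.pi * k
      · have hz0 : z.1 r = 0 := hz ⟨Quotient.mk (sameCycleSetoid P) e, hgood⟩
        have := iterK l P lam z.1 hK j r
        rw [hje, hz0] at this
        rcases mul_eq_zero.1 this.symm with h | h
        · exact absurd h (Dprod_ne l P lam j r)
        · exact h
      · by_contra hne
        have hchi := ker_vanish l P lam z.1 hK e hne
        have htl : trailLen l P e = trailLen l P r := by rw [← hje, trailLen_iter]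
        rw [htl] at hchi
        exact hgood ((cond_iff l P lam r).1 hchi)
    -- injectivity from the "kernel trivial" statement
    have h0 : ∀ t : S, (x - y).1 (Quotient.out t.1) = 0 := by
      intro t
      have := congrFun hxy t
      simp only [hF, LinearMap.coe_mk, AddHom.coe_mk] at this
      simp [Submodule.coe_sub, Pi.sub_apply, this]
    have := hsub (x - y) h0
    exact sub_eq_zero.1 this
  have hsurj : Function.Surjective F := by
    intro f
    set xfun : E → ℂ := fun e => ∑ t : S, f t * vr l P lam (Quotient.out t.1) e with hx
    have hxker : xfun ∈ LinearMap.ker (Matrix.toLin' (Amat l P lam)) := by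
      rw [mem_ker_iff]
      intro e
      simp only [hx]
      rw [Finset.mul_sum]
      refine Finset.sum_congr rfl fun t _ => ?_
      have hchi : Complex.exp (Complex.I * lam * trailLen l P (Quotient.out t.1)) = 1 :=
        (cond_iff l P lam _).2 t.2
      have := vr_K l P lam (Quotient.out t.1) hchi e
      ring_nf
      linear_combination f t * this
    refine ⟨⟨xfun, hxker⟩, ?_⟩
    funext t'
    show ∑ t : S, f t * vr l P lam (Quotient.out t.1) (Quotient.out t'.1) = f t'
    rw [Fintype.sum_eq_single t']
    · rw [vr_self, mul_one]
    · intro t ht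
      have hnsc : ¬ P.SameCycle (Quotient.out t.1) (Quotient.out t'.1) := by
        intro h
        exact ht (Subtype.ext (Quotient.out_equiv_out.1 h))
      rw [vr_notSameCycle l P lam _ _ hnsc, mul_zero]
  have hequiv := LinearEquiv.ofBijective F ⟨hinj, hsurj⟩
  rw [hequiv.finrank_eq, Module.finrank_pi, Nat.card_eq_fintype_card]

lemma det_iff (hl : ∀ e, 0 < l e) :
    (Amat l P lam).det = 0 ↔
      ∃ (e : E) (k : ℤ), lam = ((2 * Real.pi * k / trailLen l P e : ℝ) : ℂ) := by
  rw [← Matrix.exists_mulVec_eq_zero_iff]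
  constructor
  · rintro ⟨v, hv0, hv⟩
    have hK := (K_iff l P lam v).1 hv
    obtain ⟨e, he⟩ := Function.ne_iff.1 hv0
    have hchi := ker_vanish l P lam v hK e he
    obtain ⟨k, hk⟩ := (cond_iff l P lam e).1 hchi
    have hL : ((trailLen l P e : ℝ) : ℂ) ≠ 0 := by
      exact_mod_cast (trailLen_pos l P hl e).ne'
    refine ⟨e, k, ?_⟩
    push_cast
    rw [eq_div_iff hL]
    exact hk
  · rintro ⟨e, k, hlam⟩
    have hL : (trailLen l P e : ℝ) ≠ 0 := (trailLen_pos l P hl e).ne'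
    have hk : lam * (trailLen l P e : ℂ) = 2 * Real.pi * k := by
      have hLc : ((trailLen l P e : ℝ) : ℂ) ≠ 0 := by exact_mod_cast hL
      rw [hlam]
      push_cast
      field_simp
    have hchi := (cond_iff l P lam e).2 ⟨k, hk⟩
    refine ⟨vr l P lam e, ?_, (K_iff l P lam _).2 (vr_K l P lam e hchi)⟩
    intro h
    have := congrFun h e
    rw [vr_self] at this
    exact one_ne_zero this

end aux

/-- For a `G`-permutation `P` of a finite metric Eulerian digraph, with trail decomposition
`T₁,…,T_m` of total lengths `L₁,…,L_m`: the spectrum of `D_{Γ(P)}` (the zero set of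
`λ ↦ det(diag(e^{iλl}) − P)`) equals `{2πk/Lᵢ}`; the multiplicity of `0` (the kernel dimension
of `diag(e^{iλl}) − P` at `λ = 0`) is the number `m` of trails; and for `λ ≠ 0` the
multiplicity equals the number of trails with `λ·Lᵢ ∈ 2πℤ`. -/

theorem stmt15 {V E : Type} [Fintype E] [DecidableEq E] (src dst : E → V)
    (l : E → ℝ) (hl : ∀ e, 0 < l e)
    (P : Equiv.Perm E) (hP : ∀ e, dst e = src (P e)) :
    ({lam : ℂ |
        (Matrix.diagonal (fun e : E => Complex.exp (Complex.I * lam * l e)) -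
          Matrix.of (fun e e' : E => if e = P e' then (1 : ℂ) else 0)).det = 0} =
      {lam : ℂ | ∃ (e : E) (k : ℤ), lam = (2 * Real.pi * k / trailLen l P e : ℝ)}) ∧
    (Module.finrank ℂ
        (LinearMap.ker (Matrix.toLin'
          (Matrix.diagonal (fun e : E => Complex.exp (Complex.I * (0:ℂ) * l e)) -
            Matrix.of (fun e e' : E => if e = P e' then (1 : ℂ) else 0)))) =
      Nat.card (Quotient (sameCycleSetoid P))) ∧
    (∀ lam : ℂ, lam ≠ 0 →
      Module.finrank ℂ
          (LinearMap.ker (Matrix.toLin'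
            (Matrix.diagonal (fun e : E => Complex.exp (Complex.I * lam * l e)) -
              Matrix.of (fun e e' : E => if e = P e' then (1 : ℂ) else 0)))) =
        Nat.card {t : Quotient (sameCycleSetoid P) //
          ∃ k : ℤ, lam * (trailLen l P (Quotient.out t) : ℂ) = 2 * Real.pi * k}) := by
  refine ⟨?_, ?_, fun lam _ => main_dim l P lam⟩
  · ext lam
    simp only [Set.mem_setOf_eq]
    exact det_iff l P lam hl
  · exact (main_dim l P 0).trans
      (Nat.card_congr (Equiv.subtypeUnivEquiv fun t => ⟨0, by simp⟩))
end

section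
/- Let G be a finite digraph without isolated vertices and 𝒜(G) its directed edge-adjacency matrix, indexed by edges, with entry (e, e′) equal to 1 if head(e′) = tail(e) and 0 otherwise. Then 𝒜(G) is non-singular if and only if G is a disjoint union of directed cycles, in which case det 𝒜(G) = (−1)^{α(G) − η(G)}, where α(G) is the number of cycles (connected components) and η(G) the number of edges. -/
/-- A permutation `P` of the edges exhibiting the digraph as a disjoint union of directed
cycles. -/
def IsDisjointCycles {V E : Type} (src dst : E → V) (P : Equiv.Perm E) : Prop :=
  (∀ e, dst e = src (P e)) ∧
  (∀ e : E, ∀ i j : ℕ, i < Function.minimalPeriod (⇑P) e → j < Function.minimalPeriod (⇑P) e →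
    src ((⇑P)^[i] e) = src ((⇑P)^[j] e) → i = j) ∧
  (∀ e e' : E, (src e = src e' ∨ src e = dst e' ∨ dst e = src e' ∨ dst e = dst e') →
    P.SameCycle e e')

/-- The directed edge-adjacency matrix: entry `(e, e')` is `1` iff `e'` ends where `e`
starts. -/
def adjMat {V E : Type} [DecidableEq V] [Fintype E] (src dst : E → V) : Matrix E E ℂ :=
  Matrix.of fun e e' : E => if dst e' = src e then (1 : ℂ) else 0

open Equiv Function in
/-- The number of orbits of a permutation of a finite type. -/
lemma card_orbits {E : Type} [Fintype E] [DecidableEq E] (σ : Equiv.Perm E) :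
    Nat.card (Quotient (sameCycleSetoid σ)) =
      (Fintype.card E - σ.cycleType.sum) + Multiset.card σ.cycleType := by
  classical
  have hzf : ∀ x : E, σ x = x → ∀ y, σ.SameCycle x y → y = x := by
    rintro x hx y ⟨i, rfl⟩
    exact Equiv.Perm.zpow_apply_eq_self_of_apply_eq_self hx i
  set f : E → (Function.fixedPoints ⇑σ ⊕ σ.cycleFactorsFinset) := fun x =>
    if h : σ x = x then Sum.inl ⟨x, h⟩
    else Sum.inr ⟨σ.cycleOf x,
      Equiv.Perm.cycleOf_mem_cycleFactorsFinset_iff.mpr (Equiv.Perm.mem_support.mpr h)⟩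
    with hfdef
  have hwd : ∀ x y : E, σ.SameCycle x y → f x = f y := by
    intro x y hxy
    by_cases hx : σ x = x
    · obtain rfl := hzf x hx y hxy
      rfl
    · have hy : ¬ σ y = y := by
        intro hy
        obtain rfl := hzf y hy x hxy.symm
        exact hx hy
      simp only [hfdef, dif_neg hx, dif_neg hy, Sum.inr.injEq, Subtype.mk.injEq]
      exact hxy.cycleOf_eq
  set F : Quotient (sameCycleSetoid σ) → (Function.fixedPoints ⇑σ ⊕ σ.cycleFactorsFinset) :=
    Quotient.lift f hwd with hFdef
  have hbij : Function.Bijective F := by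
    constructor
    · refine Quotient.ind₂ ?_
      intro x y h
      simp only [hFdef, Quotient.lift_mk, hfdef] at h
      apply Quotient.sound
      show σ.SameCycle x y
      by_cases hx : σ x = x
      · by_cases hy : σ y = y
        · rw [dif_pos hx, dif_pos hy] at h
          simp only [Sum.inl.injEq, Subtype.mk.injEq] at h
          have h : x = y := congrArg Subtype.val h
          exact h ▸ Equiv.Perm.SameCycle.refl σ x
        · rw [dif_pos hx, dif_neg hy] at h
          exact absurd h (by simp)
      · by_cases hy : σ y = y
        · rw [dif_neg hx, dif_pos hy] at h
          exact absurd h (by simp)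
        · rw [dif_neg hx, dif_neg hy] at h
          simp only [Sum.inr.injEq, Subtype.mk.injEq] at h
          have hysup : y ∈ (σ.cycleOf x).support := by
            rw [h]
            exact Equiv.Perm.mem_support_cycleOf_iff.mpr
              ⟨Equiv.Perm.SameCycle.refl σ y, Equiv.Perm.mem_support.mpr hy⟩
          exact (Equiv.Perm.mem_support_cycleOf_iff.mp hysup).1
    · rintro (⟨x, hx⟩ | ⟨c, hc⟩)
      · refine ⟨⟦x⟧, ?_⟩
        simp only [hFdef, Quotient.lift_mk, hfdef]
        rw [dif_pos (show σ x = x from hx)]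
      · obtain ⟨hcyc, hsup⟩ := Equiv.Perm.mem_cycleFactorsFinset_iff.mp hc
        obtain ⟨x, hx1, -⟩ := hcyc
        have hxc : x ∈ c.support := Equiv.Perm.mem_support.mpr hx1
        have hσx : σ x ≠ x := by
          rw [← hsup x hxc]; exact hx1
        refine ⟨⟦x⟧, ?_⟩
        simp only [hFdef, hfdef, Quotient.lift_mk, dif_neg hσx, Sum.inr.injEq]
        exact Subtype.ext (Equiv.Perm.cycle_is_cycleOf hxc hc).symm
  have hcard := Nat.card_eq_of_bijective F hbij
  rw [hcard, Nat.card_eq_fintype_card, Fintype.card_sum,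
    Equiv.Perm.card_fixedPoints, Fintype.card_coe]
  congr 1
  simp [Equiv.Perm.cycleType]

/-- The sign of a permutation, in terms of number of orbits. -/
lemma sign_eq_pow_card_sub_orbits {E : Type} [Fintype E] [DecidableEq E] (σ : Equiv.Perm E) :
    ((Equiv.Perm.sign σ : ℤ) : ℂ) =
      (-1 : ℂ) ^ (Fintype.card E - Nat.card (Quotient (sameCycleSetoid σ))) := by
  have h1 : σ.cycleType.sum ≤ Fintype.card E := by
    rw [Equiv.Perm.sum_cycleType]
    exact (Finset.card_le_card (Finset.subset_univ _)).trans_eq (Finset.card_univ)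
  have h2 : Multiset.card σ.cycleType ≤ σ.cycleType.sum := by
    have := Multiset.card_nsmul_le_sum (s := σ.cycleType) (a := 1)
      (fun n hn => (Equiv.Perm.one_lt_of_mem_cycleType hn).le)
    simpa using this
  rw [card_orbits]
  have harith : Fintype.card E - ((Fintype.card E - σ.cycleType.sum) +
      Multiset.card σ.cycleType) = σ.cycleType.sum - Multiset.card σ.cycleType := by
    omega
  rw [harith, Equiv.Perm.sign_of_cycleType]
  have : σ.cycleType.sum + Multiset.card σ.cycleType =
      (σ.cycleType.sum - Multiset.card σ.cycleType) + 2 * Multiset.card σ.cycleType := by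
    omega
  rw [this]
  push_cast
  rw [pow_add, pow_mul]
  norm_num

/-- For a finite digraph `G` without isolated vertices, the directed adjacency matrix `𝒜(G)` is
non-singular iff `G` is a disjoint union of directed cycles, in which case
`det 𝒜(G) = (−1)^{α(G) − η(G)}` with `α` the number of cycles and `η` the number of edges. -/
theorem stmt17 {V E : Type} [Fintype V] [Fintype E] [DecidableEq V] [DecidableEq E]
    (src dst : E → V)
    (hni : ∀ v : V, (∃ e, src e = v) ∨ (∃ e, dst e = v)) :
    ((adjMat src dst).det ≠ 0 ↔ ∃ P : Equiv.Perm E, IsDisjointCycles src dst P) ∧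
    ∀ P : Equiv.Perm E, IsDisjointCycles src dst P →
      (adjMat src dst).det =
        (-1 : ℂ) ^ (Fintype.card E - Nat.card (Quotient (sameCycleSetoid P))) := by
  classical
  -- determinant as a sum over permutations of indicator terms
  have hdet : (adjMat src dst).det =
      ∑ σ : Equiv.Perm E, (Equiv.Perm.sign σ : ℤ) •
        (if ∀ e, dst e = src (σ e) then (1 : ℂ) else 0) := by
    rw [Matrix.det_apply]
    refine Finset.sum_congr rfl fun σ _ => ?_
    congr 1
    by_cases h : ∀ e, dst e = src (σ e)
    · rw [if_pos h]
      refine Finset.prod_eq_one fun e _ => ?_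
      simp [adjMat, h e]
    · rw [if_neg h]
      push_neg at h
      obtain ⟨e, he⟩ := h
      refine Finset.prod_eq_zero (Finset.mem_univ e) ?_
      simp [adjMat, he]
  -- key: from `IsDisjointCycles` we derive injectivity and the determinant value
  have hkey : ∀ P : Equiv.Perm E, IsDisjointCycles src dst P →
      (adjMat src dst).det = ((Equiv.Perm.sign P : ℤ) : ℂ) := by
    intro P hP
    obtain ⟨h1, h2, h3⟩ := hP
    -- within a cycle, src is injective
    have h2' : ∀ a b : E, P.SameCycle a b → src a = src b → a = b := by
      intro a b hab hsrc
      obtain ⟨i, -, hi⟩ := hab.exists_pow_eq'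
      have hper : 0 < Function.minimalPeriod (⇑P) a := by
        apply Function.IsPeriodicPt.minimalPeriod_pos (orderOf_pos P)
        show (⇑P)^[orderOf P] a = a
        rw [← Equiv.Perm.coe_pow, pow_orderOf_eq_one]
        rfl
      have hb : b = (⇑P)^[i % Function.minimalPeriod (⇑P) a] a := by
        rw [Function.iterate_mod_minimalPeriod_eq, ← Equiv.Perm.coe_pow, hi]
      have := h2 a 0 (i % Function.minimalPeriod (⇑P) a) hper
        (Nat.mod_lt i hper)
        (by simpa [← hb] using hsrc)
      rw [hb, ← this]
      simp
    have hsrcInj : Function.Injective src := by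
      intro a b hab
      exact h2' a b (h3 a b (Or.inl hab)) hab
    have hdstInj : Function.Injective dst := by
      intro a b hab
      have hsc : P.SameCycle a b := h3 a b (Or.inr (Or.inr (Or.inr hab)))
      have hsc' : P.SameCycle (P a) (P b) :=
        (Equiv.Perm.sameCycle_apply_left.mpr (Equiv.Perm.sameCycle_apply_right.mpr hsc))
      have : P a = P b := h2' _ _ hsc' (by rw [← h1 a, ← h1 b, hab])
      exact P.injective this
    -- only σ = P contributes
    rw [hdet, Finset.sum_eq_single P]
    · rw [if_pos h1]
      simp
    · intro σ _ hσ
      rw [if_neg, smul_zero]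
      intro hcond
      apply hσ
      ext e
      have : src (σ e) = src (P e) := by rw [← hcond e, ← h1 e]
      exact h2' _ _ (h3 _ _ (Or.inl this)) this
    · intro h
      exact absurd (Finset.mem_univ P) h
  constructor
  · constructor
    · -- det ≠ 0 → disjoint cycles
      intro hne
      -- src injective
      have hsrcInj : Function.Injective src := by
        intro a b hab
        by_contra hne'
        apply hne
        apply Matrix.det_zero_of_row_eq hne'
        funext e'
        simp [adjMat, hab]
      have hdstInj : Function.Injective dst := by
        intro a b hab
        by_contra hne'
        apply hne
        apply Matrix.det_zero_of_column_eq hne'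
        intro k
        simp [adjMat, hab]
      -- a contributing permutation exists
      have hex : ∃ σ : Equiv.Perm E, ∀ e, dst e = src (σ e) := by
        by_contra hno
        push_neg at hno
        apply hne
        rw [hdet]
        refine Finset.sum_eq_zero fun σ _ => ?_
        rw [if_neg, smul_zero]
        intro hcond
        obtain ⟨e, he⟩ := hno σ
        exact he (hcond e)
      obtain ⟨σ, hσ⟩ := hex
      refine ⟨σ, hσ, ?_, ?_⟩
      · intro e i j hi hj hsrc
        exact Function.iterate_injOn_Iio_minimalPeriod hi hj (hsrcInj hsrc)
      · intro e e' hshare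
        rcases hshare with h | h | h | h
        · rw [hsrcInj h]
        · have : e = σ e' := hsrcInj (by rw [h, hσ e'])
          rw [this]
          exact (Equiv.Perm.sameCycle_apply_left).mpr (Equiv.Perm.SameCycle.refl _ _)
        · have : σ e = e' := hsrcInj (by rw [← hσ e, h])
          rw [← this]
          exact (Equiv.Perm.sameCycle_apply_right).mpr (Equiv.Perm.SameCycle.refl _ _)
        · have : σ e = σ e' := hsrcInj (by rw [← hσ e, ← hσ e', h])
          rw [σ.injective this]
    · -- disjoint cycles → det ≠ 0
      rintro ⟨P, hP⟩
      rw [hkey P hP]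
      rcases Int.units_eq_one_or (Equiv.Perm.sign P) with h | h <;> simp [h]
  · intro P hP
    rw [hkey P hP, sign_eq_pow_card_sub_orbits]
end

section
/- Let G be a finite digraph with n edges, with edge-adjacency matrix 𝒜(G) (entry (e,e′) = 1 iff head(e′) = tail(e)). Then the multivariate polynomial det(diag(x) − 𝒜(G)) in variables (x_e)_{e ∈ E} equals Σ_{C ∈ 𝒞(G)} (−1)^{α(C)} Π_{e ∉ E(C)} x_e, where 𝒞(G) is the set of subgraphs of G (including the empty subgraph) whose components are disjoint directed cycles, and α(C) is the number of cycles in C. -/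
open scoped BigOperators

/-- `(S, P)` encodes a subgraph of `G` (edge set `S`) which is a disjoint collection of
directed cycles, together with its successor permutation `P`: `P` is the identity off `S`,
follows the cycle structure on `S` (`dst e = src (P e)`), the vertices along each cycle are
pairwise distinct, and edges of `S` sharing a vertex lie on the same cycle. -/
def IsCycColl {V E : Type} (src dst : E → V) (S : Finset E) (P : Equiv.Perm E) : Prop :=
  (∀ e ∉ S, P e = e) ∧
  (∀ e ∈ S, P e ∈ S ∧ dst e = src (P e)) ∧
  (∀ e ∈ S, ∀ i j : ℕ, i < Function.minimalPeriod (⇑P) e → j < Function.minimalPeriod (⇑P) e →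
    src ((⇑P)^[i] e) = src ((⇑P)^[j] e) → i = j) ∧
  (∀ e ∈ S, ∀ e' ∈ S, (src e = src e' ∨ src e = dst e' ∨ dst e = src e' ∨ dst e = dst e') →
    P.SameCycle e e')

section Aux

open Equiv Equiv.Perm Function Finset

variable {V E : Type} [Fintype V] [Fintype E] [DecidableEq V] [DecidableEq E]

/-- The first two conditions of `IsCycColl`. -/
def Good12 (src dst : E → V) (S : Finset E) (P : Equiv.Perm E) : Prop :=
  (∀ e ∉ S, P e = e) ∧ (∀ e ∈ S, P e ∈ S ∧ dst e = src (P e))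

theorem mem_S_of_sameCycle {S : Finset E} {P : Equiv.Perm E}
    (h1 : ∀ e ∉ S, P e = e) {e f : E} (he : e ∈ S) (hsc : P.SameCycle e f) : f ∈ S := by
  obtain ⟨k, hk⟩ := hsc
  by_contra hf
  have : (P ^ (-k)) f = f := Equiv.Perm.zpow_apply_eq_self_of_apply_eq_self (h1 f hf) (-k)
  rw [← hk, ← Equiv.Perm.mul_apply, ← zpow_add, neg_add_cancel, zpow_zero,
    Equiv.Perm.one_apply] at this
  exact hf (by rw [← hk, ← this]; exact he)

theorem iterate_mem_S {S : Finset E} {P : Equiv.Perm E}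
    (h1 : ∀ e ∉ S, P e = e) {e : E} (he : e ∈ S) (n : ℕ) : (⇑P)^[n] e ∈ S := by
  have : (⇑P)^[n] e = (P ^ n) e := congrFun (Equiv.Perm.iterate_eq_pow P n) e
  rw [this]
  exact mem_S_of_sameCycle h1 he ⟨(n : ℤ), by simp⟩

theorem minimalPeriod_perm_pos (P : Equiv.Perm E) (e : E) :
    0 < Function.minimalPeriod (⇑P) e := by
  apply Function.IsPeriodicPt.minimalPeriod_pos (orderOf_pos P)
  show (⇑P)^[orderOf P] e = e
  have : (⇑P)^[orderOf P] e = (P ^ orderOf P) e := congrFun (Equiv.Perm.iterate_eq_pow P _) e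
  rw [this, pow_orderOf_eq_one]; rfl

theorem iscyccoll_iff (src dst : E → V) (S : Finset E) (P : Equiv.Perm E) :
    IsCycColl src dst S P ↔ Good12 src dst S P ∧ Set.InjOn src ↑S := by
  constructor
  · rintro ⟨h1, h2, h3, h4⟩
    refine ⟨⟨h1, h2⟩, ?_⟩
    intro a ha b hb hab
    have hsc : P.SameCycle a b := h4 a ha b hb (Or.inl hab)
    obtain ⟨i, _, _, hi⟩ := Equiv.Perm.SameCycle.exists_pow_eq P hsc
    have hiter : (⇑P)^[i] a = b := by
      rw [← hi]; exact congrFun (Equiv.Perm.iterate_eq_pow P i) a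
    set T := Function.minimalPeriod (⇑P) a with hT
    have hTpos : 0 < T := minimalPeriod_perm_pos P a
    have hmod : (⇑P)^[i % T] a = b := by
      rw [Function.iterate_mod_minimalPeriod_eq, hiter]
    have := h3 a ha (i % T) 0 (Nat.mod_lt _ hTpos) hTpos
      (by rw [hmod, Function.iterate_zero_apply]; exact hab.symm)
    rw [this, Function.iterate_zero_apply] at hmod
    exact hmod
  · rintro ⟨⟨h1, h2⟩, hinj⟩
    have hmemS : ∀ e ∈ S, ∀ n : ℕ, (⇑P)^[n] e ∈ S := fun e he n => iterate_mem_S h1 he n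
    refine ⟨h1, h2, ?_, ?_⟩
    · intro e he i j hi hj hsrc
      have hij : (⇑P)^[i] e = (⇑P)^[j] e :=
        hinj (hmemS e he i) (hmemS e he j) hsrc
      exact Function.iterate_injOn_Iio_minimalPeriod hi hj hij
    · intro e he e' he' hcase
      have hPe : P e ∈ S := (h2 e he).1
      have hPe' : P e' ∈ S := (h2 e' he').1
      have hde : dst e = src (P e) := (h2 e he).2
      have hde' : dst e' = src (P e') := (h2 e' he').2
      have self1 : P.SameCycle e (P e) := ⟨1, by simp⟩
      rcases hcase with h | h | h | h
      · have : e = e' := hinj he he' h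
        exact this ▸ Equiv.Perm.SameCycle.refl P e
      · have : e = P e' := hinj he hPe' (by rw [h, hde'])
        rw [this]
        exact Equiv.Perm.SameCycle.symm (⟨1, by simp⟩ : P.SameCycle e' (P e'))
      · have : P e = e' := hinj hPe he' (by rw [← hde, h])
        exact this ▸ self1
      · have : P e = P e' := hinj hPe hPe' (by rw [← hde, ← hde', h])
        have : e = e' := P.injective this
        exact this ▸ Equiv.Perm.SameCycle.refl P e

theorem card_classes (S : Finset E) (P : Equiv.Perm E) (h1 : ∀ e ∉ S, P e = e) :
    Nat.card {t : Quotient (sameCycleSetoid P) // Quotient.out t ∈ S}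
      = P.cycleFactorsFinset.card + (S \ P.support).card := by
  classical
  have hsupp : P.support ⊆ S := by
    intro e he
    by_contra hne
    exact (Equiv.Perm.mem_support.mp he) (h1 e hne)
  have hscout : ∀ (t : Quotient (sameCycleSetoid P)) (e : E),
      Quotient.mk (sameCycleSetoid P) e = t → P.SameCycle e (Quotient.out t) := by
    intro t e hmk
    have h : (Quotient.mk (sameCycleSetoid P) e) = Quotient.mk (sameCycleSetoid P) (Quotient.out t) := by
      rw [hmk, Quotient.out_eq]
    exact Quotient.exact h
  have hout : ∀ t : Quotient (sameCycleSetoid P),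
      Quotient.out t ∈ S ↔ t ∈ S.image (Quotient.mk (sameCycleSetoid P)) := by
    intro t
    constructor
    · intro h
      exact Finset.mem_image.mpr ⟨Quotient.out t, h, Quotient.out_eq t⟩
    · intro h
      obtain ⟨e, he, hmk⟩ := Finset.mem_image.mp h
      exact mem_S_of_sameCycle h1 he (hscout t e hmk)
  rw [Nat.card_congr (Equiv.subtypeEquivRight hout), Nat.card_eq_finsetCard]
  have hQsupp : ∀ (t : Quotient (sameCycleSetoid P)),
      t ∈ (S ∩ P.support).image (Quotient.mk (sameCycleSetoid P)) →
        Quotient.out t ∈ P.support := by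
    intro t ht
    obtain ⟨e, he, hmk⟩ := Finset.mem_image.mp ht
    obtain ⟨k, hk⟩ := hscout t e hmk
    rw [← hk]
    exact Equiv.Perm.zpow_apply_mem_support.mpr (Finset.mem_inter.mp he).2
  have himg1 : ((S ∩ P.support).image (Quotient.mk (sameCycleSetoid P))).card
      = P.cycleFactorsFinset.card := by
    apply Finset.card_bij (fun t _ => P.cycleOf (Quotient.out t))
    · intro t ht
      exact Equiv.Perm.cycleOf_mem_cycleFactorsFinset_iff.mpr (hQsupp t ht)
    · intro t1 ht1 t2 ht2 heq
      have h2 : Quotient.out t2 ∈ (P.cycleOf (Quotient.out t1)).support := by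
        rw [heq]
        exact Equiv.Perm.mem_support_cycleOf_iff.mpr
          ⟨Equiv.Perm.SameCycle.refl P _, hQsupp t2 ht2⟩
      have hsc : P.SameCycle (Quotient.out t1) (Quotient.out t2) :=
        (Equiv.Perm.mem_support_cycleOf_iff.mp h2).1
      calc t1 = Quotient.mk (sameCycleSetoid P) (Quotient.out t1) := (Quotient.out_eq t1).symm
        _ = Quotient.mk (sameCycleSetoid P) (Quotient.out t2) := Quotient.sound hsc
        _ = t2 := Quotient.out_eq t2
    · intro c hc
      have hcyc : c.IsCycle := (Equiv.Perm.mem_cycleFactorsFinset_iff.mp hc).1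
      obtain ⟨a, ha1, -⟩ := hcyc
      have hac : a ∈ c.support := Equiv.Perm.mem_support.mpr ha1
      have hceq : c = P.cycleOf a := Equiv.Perm.cycle_is_cycleOf hac hc
      have haP : a ∈ P.support :=
        Equiv.Perm.cycleOf_mem_cycleFactorsFinset_iff.mp (hceq ▸ hc)
      refine ⟨Quotient.mk (sameCycleSetoid P) a, Finset.mem_image.mpr
        ⟨a, Finset.mem_inter.mpr ⟨hsupp haP, haP⟩, rfl⟩, ?_⟩
      rw [hceq]
      exact (Equiv.Perm.SameCycle.cycleOf_eq (hscout _ a rfl)).symm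
  have himg2 : ((S \ P.support).image (Quotient.mk (sameCycleSetoid P))).card
      = (S \ P.support).card := by
    apply Finset.card_image_of_injOn
    intro a ha b hb hmk
    have hsc : P.SameCycle a b := Quotient.exact hmk
    obtain ⟨k, hk⟩ := hsc
    have hfix : P a = a := by
      have := (Finset.mem_sdiff.mp ha).2
      exact Equiv.Perm.notMem_support.mp this
    rw [← hk, Equiv.Perm.zpow_apply_eq_self_of_apply_eq_self hfix]
  have hdisj : Disjoint ((S \ P.support).image (Quotient.mk (sameCycleSetoid P)))
      ((S ∩ P.support).image (Quotient.mk (sameCycleSetoid P))) := by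
    rw [Finset.disjoint_left]
    intro t ht1 ht2
    obtain ⟨a, ha, hmka⟩ := Finset.mem_image.mp ht1
    obtain ⟨b, hb, hmkb⟩ := Finset.mem_image.mp ht2
    have hsc : P.SameCycle a b := Quotient.exact (hmka.trans hmkb.symm)
    obtain ⟨k, hk⟩ := hsc
    have hfix : P a = a := Equiv.Perm.notMem_support.mp (Finset.mem_sdiff.mp ha).2
    rw [Equiv.Perm.zpow_apply_eq_self_of_apply_eq_self hfix] at hk
    exact (Finset.mem_sdiff.mp ha).2 ((hk ▸ (Finset.mem_inter.mp hb).2))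
  calc (S.image (Quotient.mk (sameCycleSetoid P))).card
      = (((S \ P.support) ∪ (S ∩ P.support)).image (Quotient.mk (sameCycleSetoid P))).card := by
        rw [Finset.sdiff_union_inter]
    _ = ((S \ P.support).image (Quotient.mk (sameCycleSetoid P)) ∪
          (S ∩ P.support).image (Quotient.mk (sameCycleSetoid P))).card := by
        rw [Finset.image_union]
    _ = (S \ P.support).card + P.cycleFactorsFinset.card := by
        rw [Finset.card_union_of_disjoint hdisj, himg1, himg2]
    _ = P.cycleFactorsFinset.card + (S \ P.support).card := Nat.add_comm _ _

theorem sign_neg_one_pow (S : Finset E) (P : Equiv.Perm E) (h1 : ∀ e ∉ S, P e = e) :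
    ((Equiv.Perm.sign P : ℤ) : ℂ) * (-1) ^ S.card
      = (-1) ^ (Nat.card {t : Quotient (sameCycleSetoid P) // Quotient.out t ∈ S}) := by
  classical
  rw [card_classes S P h1]
  have hsupp : P.support ⊆ S := by
    intro e he
    by_contra hne
    exact (Equiv.Perm.mem_support.mp he) (h1 e hne)
  have hcardS : S.card = (S \ P.support).card + P.support.card :=
    (Finset.card_sdiff_add_card_eq_card hsupp).symm
  have hsign : Equiv.Perm.sign P
      = (-1 : ℤˣ) ^ (P.support.card + P.cycleFactorsFinset.card) := by
    rw [Equiv.Perm.sign_of_cycleType]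
    congr 1
    rw [Equiv.Perm.sum_cycleType]
    congr 1
    rw [Equiv.Perm.cycleType_def]
    simp
  rw [hsign, hcardS]
  push_cast
  rw [← pow_add]
  have hexp : P.support.card + P.cycleFactorsFinset.card
      + ((S \ P.support).card + P.support.card)
      = (P.cycleFactorsFinset.card + (S \ P.support).card) + 2 * P.support.card := by ring
  rw [hexp, pow_add, pow_mul, neg_one_sq, one_pow, mul_one]

/-- The summand in the permutation–subset expansion of the determinant. -/
noncomputable def wt (src dst : E → V) (x : E → ℂ) (p : Finset E × Equiv.Perm E) : ℂ :=
  ((Equiv.Perm.sign p.2 : ℤ) : ℂ) *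
    ((∏ e ∈ p.1, -(adjMat src dst (p.2 e) e)) *
      ∏ e ∈ Finset.univ \ p.1, Matrix.diagonal x (p.2 e) e)

theorem adjMat_apply (src dst : E → V) (y e : E) :
    adjMat src dst y e = if dst e = src y then (1 : ℂ) else 0 := rfl

theorem wt_mk (src dst : E → V) (x : E → ℂ) (S : Finset E) (P : Equiv.Perm E) :
    wt src dst x (S, P) = ((Equiv.Perm.sign P : ℤ) : ℂ) *
      ((∏ e ∈ S, -(adjMat src dst (P e) e)) *
        ∏ e ∈ Finset.univ \ S, Matrix.diagonal x (P e) e) := rfl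

theorem wt_of_good12 (src dst : E → V) (x : E → ℂ) (S : Finset E) (P : Equiv.Perm E)
    (h : Good12 src dst S P) :
    wt src dst x (S, P) =
      ((Equiv.Perm.sign P : ℤ) : ℂ) * (-1) ^ S.card * ∏ e ∈ Finset.univ \ S, x e := by
  have hA : ∏ e ∈ S, -(adjMat src dst (P e) e) = (-1 : ℂ) ^ S.card := by
    have h1 : ∀ e ∈ S, -(adjMat src dst (P e) e) = -1 := by
      intro e he
      show (-(if dst e = src (P e) then (1 : ℂ) else 0)) = -1
      rw [if_pos (h.2 e he).2]
    rw [Finset.prod_congr rfl h1, Finset.prod_const]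
  have hX : ∏ e ∈ Finset.univ \ S, Matrix.diagonal x (P e) e
      = ∏ e ∈ Finset.univ \ S, x e := by
    refine Finset.prod_congr rfl (fun e he => ?_)
    rw [h.1 e (Finset.mem_sdiff.mp he).2, Matrix.diagonal_apply_eq]
  rw [wt_mk, hA, hX, mul_assoc]

theorem wt_of_not_good12 (src dst : E → V) (x : E → ℂ) (S : Finset E) (P : Equiv.Perm E)
    (h : ¬ Good12 src dst S P) :
    wt src dst x (S, P) = 0 := by
  rw [wt_mk]
  rw [Good12, not_and_or] at h
  rcases h with h | h
  · push_neg at h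
    obtain ⟨e, he, hne⟩ := h
    have hz : ∏ e ∈ Finset.univ \ S, Matrix.diagonal x (P e) e = 0 :=
      Finset.prod_eq_zero (Finset.mem_sdiff.mpr ⟨Finset.mem_univ e, he⟩)
        (Matrix.diagonal_apply_ne x hne)
    rw [hz]; ring
  · push_neg at h
    obtain ⟨e, he, hne⟩ := h
    by_cases hfix : ∀ f ∉ S, P f = f
    · have hPe : P e ∈ S := by
        by_contra hPeS
        have h2 : P (P e) = P e := hfix (P e) hPeS
        have h3 : P e = e := P.injective h2
        exact hPeS (by rw [h3]; exact he)
      have hds : dst e ≠ src (P e) := hne hPe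
      have hz : ∏ e ∈ S, -(adjMat src dst (P e) e) = 0 := by
        apply Finset.prod_eq_zero he
        show (-(if dst e = src (P e) then (1 : ℂ) else 0)) = 0
        rw [if_neg hds, neg_zero]
      rw [hz]; ring
    · push_neg at hfix
      obtain ⟨f, hf, hnf⟩ := hfix
      have hz : ∏ e ∈ Finset.univ \ S, Matrix.diagonal x (P e) e = 0 :=
        Finset.prod_eq_zero (Finset.mem_sdiff.mpr ⟨Finset.mem_univ f, hf⟩)
          (Matrix.diagonal_apply_ne x hnf)
      rw [hz]; ring

theorem exists_badpair {src : E → V} {S : Finset E} (h : ¬ Set.InjOn src ↑S) :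
    ∃ q : E × E, q.1 ∈ S ∧ q.2 ∈ S ∧ q.1 ≠ q.2 ∧ src q.1 = src q.2 := by
  rw [Set.InjOn] at h
  push_neg at h
  obtain ⟨a, ha, b, hb, hab, hne⟩ := h
  exact ⟨(a, b), ha, hb, hne, hab⟩

theorem cancel (src dst : E → V) (x : E → ℂ) (s : Finset (Finset E × Equiv.Perm E))
    (hs : ∀ p, p ∈ s ↔ Good12 src dst p.1 p.2 ∧ ¬ Set.InjOn src ↑p.1) :
    ∑ p ∈ s, wt src dst x p = 0 := by
  let g : ∀ p : Finset E × Equiv.Perm E, p ∈ s → Finset E × Equiv.Perm E := fun p hp =>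
    (p.1, Equiv.swap (exists_badpair ((hs p).mp hp).2).choose.1
      (exists_badpair ((hs p).mp hp).2).choose.2 * p.2)
  have hterm : ∀ p (hp : p ∈ s), wt src dst x p + wt src dst x (g p hp) = 0 := by
    intro p hp
    obtain ⟨hgood, hninj⟩ := (hs p).mp hp
    obtain ⟨ha, hb, hab, hsrc⟩ := (exists_badpair hninj).choose_spec
    set a := (exists_badpair hninj).choose.1
    set b := (exists_badpair hninj).choose.2
    have hswap : ∀ y, src (Equiv.swap a b y) = src y := by
      intro y
      rcases eq_or_ne y a with rfl | h1
      · rw [Equiv.swap_apply_left, hsrc]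
      rcases eq_or_ne y b with rfl | h2
      · rw [Equiv.swap_apply_right, hsrc]
      rw [Equiv.swap_apply_of_ne_of_ne h1 h2]
    have hA : ∏ e ∈ p.1, -(adjMat src dst ((Equiv.swap a b * p.2) e) e)
        = ∏ e ∈ p.1, -(adjMat src dst (p.2 e) e) := by
      refine Finset.prod_congr rfl (fun e _ => ?_)
      show (-(if dst e = src (Equiv.swap a b (p.2 e)) then (1 : ℂ) else 0))
        = -(if dst e = src (p.2 e) then (1 : ℂ) else 0)
      rw [hswap]
    have hX : ∏ e ∈ Finset.univ \ p.1, Matrix.diagonal x ((Equiv.swap a b * p.2) e) e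
        = ∏ e ∈ Finset.univ \ p.1, Matrix.diagonal x (p.2 e) e := by
      refine Finset.prod_congr rfl (fun e he => ?_)
      have heS : e ∉ p.1 := (Finset.mem_sdiff.mp he).2
      have h2 : p.2 e = e := hgood.1 e heS
      rw [Equiv.Perm.mul_apply, h2,
        Equiv.swap_apply_of_ne_of_ne (fun h => heS (by rw [h]; exact ha))
          (fun h => heS (by rw [h]; exact hb))]
    have hsign : Equiv.Perm.sign (Equiv.swap a b * p.2) = -Equiv.Perm.sign p.2 := by
      rw [Equiv.Perm.sign_mul, Equiv.Perm.sign_swap hab, neg_one_mul]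
    show wt src dst x p + wt src dst x (p.1, Equiv.swap a b * p.2) = 0
    rw [show wt src dst x p = wt src dst x (p.1, p.2) from rfl, wt_mk, wt_mk, hA, hX, hsign]
    push_cast
    ring
  have hne : ∀ p (hp : p ∈ s), wt src dst x p ≠ 0 → g p hp ≠ p := by
    intro p hp _
    obtain ⟨hgood, hninj⟩ := (hs p).mp hp
    obtain ⟨ha, hb, hab, hsrc⟩ := (exists_badpair hninj).choose_spec
    intro hcontra
    have h2 : Equiv.swap (exists_badpair hninj).choose.1 (exists_badpair hninj).choose.2
        * p.2 = p.2 := congrArg Prod.snd hcontra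
    have h3 : Equiv.swap (exists_badpair hninj).choose.1 (exists_badpair hninj).choose.2
        = 1 := by
      have h4 := congrArg (fun q => q * p.2⁻¹) h2
      simpa [mul_assoc] using h4
    exact hab (Equiv.swap_eq_one_iff.mp h3)
  have hmem : ∀ p (hp : p ∈ s), g p hp ∈ s := by
    intro p hp
    obtain ⟨hgood, hninj⟩ := (hs p).mp hp
    obtain ⟨ha, hb, hab, hsrc⟩ := (exists_badpair hninj).choose_spec
    set a := (exists_badpair hninj).choose.1
    set b := (exists_badpair hninj).choose.2
    refine (hs _).mpr ⟨⟨?_, ?_⟩, hninj⟩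
    · intro e he
      rw [Equiv.Perm.mul_apply, hgood.1 e he,
        Equiv.swap_apply_of_ne_of_ne (fun h => he (by rw [h]; exact ha))
          (fun h => he (by rw [h]; exact hb))]
    · intro e he
      have h1 : p.2 e ∈ p.1 := (hgood.2 e he).1
      have h2 : dst e = src (p.2 e) := (hgood.2 e he).2
      constructor
      · rw [Equiv.Perm.mul_apply]
        rcases eq_or_ne (p.2 e) a with h | hne1
        · rw [h, Equiv.swap_apply_left]; exact hb
        rcases eq_or_ne (p.2 e) b with h | hne2
        · rw [h, Equiv.swap_apply_right]; exact ha
        rw [Equiv.swap_apply_of_ne_of_ne hne1 hne2]; exact h1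
      · rw [Equiv.Perm.mul_apply, h2]
        rcases eq_or_ne (p.2 e) a with h | hne1
        · rw [h, Equiv.swap_apply_left, hsrc]
        rcases eq_or_ne (p.2 e) b with h | hne2
        · rw [h, Equiv.swap_apply_right, hsrc]
        rw [Equiv.swap_apply_of_ne_of_ne hne1 hne2]
  have hinv : ∀ p (hp : p ∈ s), g (g p hp) (hmem p hp) = p := by
    intro p hp
    apply Prod.ext
    · rfl
    · show Equiv.swap _ _ * (Equiv.swap _ _ * p.2) = p.2
      have hbp : ∀ (h h' : ∃ q : E × E, q.1 ∈ p.1 ∧ q.2 ∈ p.1 ∧ q.1 ≠ q.2 ∧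
          src q.1 = src q.2), h.choose = h'.choose := fun h h' => rfl
      rw [hbp _ (exists_badpair ((hs p).mp hp).2), ← mul_assoc, Equiv.swap_mul_self, one_mul]
  exact Finset.sum_involution g hterm hne hmem hinv

end Aux

attribute [local instance] Classical.propDecidable

/-- The multivariate characteristic polynomial of the directed adjacency matrix:
`det(diag(x) − 𝒜(G)) = Σ_{C ∈ 𝒞(G)} (−1)^{α(C)} Π_{e ∉ E(C)} x_e`, summing over all disjoint
collections of directed cycles `C` in `G` (including the empty one), where `α(C)` is the
number of cycles of `C`. -/
theorem stmt18 {V E : Type} [Fintype V] [Fintype E] [DecidableEq V] [DecidableEq E]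
    (src dst : E → V) (x : E → ℂ) :
    (Matrix.diagonal x - adjMat src dst).det =
      ∑ C : {SP : Finset E × Equiv.Perm E // IsCycColl src dst SP.1 SP.2},
        (-1 : ℂ) ^
            (Nat.card {t : Quotient (sameCycleSetoid C.val.2) // Quotient.out t ∈ C.val.1}) *
          ∏ e ∈ Finset.univ \ C.val.1, x e := by
  classical
  rw [Matrix.det_apply']
  have step1 : ∀ σ : Equiv.Perm E,
      ∏ e, (Matrix.diagonal x - adjMat src dst) (σ e) e
        = ∑ S : Finset E, (∏ e ∈ S, -(adjMat src dst (σ e) e)) *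
            ∏ e ∈ Finset.univ \ S, Matrix.diagonal x (σ e) e := by
    intro σ
    have h1 : ∏ e, (Matrix.diagonal x - adjMat src dst) (σ e) e
        = ∏ e, (-(adjMat src dst (σ e) e) + Matrix.diagonal x (σ e) e) := by
      refine Finset.prod_congr rfl (fun e _ => ?_)
      rw [Matrix.sub_apply]; ring
    rw [h1, Finset.prod_add, Finset.powerset_univ]
  have step2 : ∑ σ : Equiv.Perm E,
        ((Equiv.Perm.sign σ : ℤ) : ℂ) * ∏ e, (Matrix.diagonal x - adjMat src dst) (σ e) e
      = ∑ p : Finset E × Equiv.Perm E, wt src dst x p := by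
    rw [Fintype.sum_prod_type]
    rw [Finset.sum_comm]
    refine Finset.sum_congr rfl fun σ _ => ?_
    rw [step1, Finset.mul_sum]
    exact Finset.sum_congr rfl fun S _ => rfl
  rw [step2]
  rw [← Finset.sum_filter_add_sum_filter_not Finset.univ
    (fun p : Finset E × Equiv.Perm E => IsCycColl src dst p.1 p.2) (wt src dst x)]
  have hzero : ∑ p ∈ Finset.univ.filter
      (fun p : Finset E × Equiv.Perm E => ¬ IsCycColl src dst p.1 p.2), wt src dst x p = 0 := by
    rw [← Finset.sum_filter_add_sum_filter_not
      (Finset.univ.filter (fun p : Finset E × Equiv.Perm E => ¬ IsCycColl src dst p.1 p.2))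
      (fun p => Good12 src dst p.1 p.2) (wt src dst x)]
    have h1 : ∑ p ∈ (Finset.univ.filter
        (fun p : Finset E × Equiv.Perm E => ¬ IsCycColl src dst p.1 p.2)).filter
        (fun p => Good12 src dst p.1 p.2), wt src dst x p = 0 := by
      apply cancel src dst x
      intro p
      simp only [Finset.mem_filter, Finset.mem_univ, true_and]
      rw [iscyccoll_iff]
      tauto
    have h2 : ∑ p ∈ (Finset.univ.filter
        (fun p : Finset E × Equiv.Perm E => ¬ IsCycColl src dst p.1 p.2)).filter
        (fun p => ¬ Good12 src dst p.1 p.2), wt src dst x p = 0 := by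
      refine Finset.sum_eq_zero fun p hp => ?_
      exact wt_of_not_good12 src dst x p.1 p.2 ((Finset.mem_filter.mp hp).2)
    rw [h1, h2, add_zero]
  rw [hzero, add_zero]
  rw [Finset.sum_subtype (p := fun p : Finset E × Equiv.Perm E => IsCycColl src dst p.1 p.2)
      (Finset.univ.filter (fun p : Finset E × Equiv.Perm E => IsCycColl src dst p.1 p.2))
      (fun p => by simp) (wt src dst x)]
  refine Finset.sum_congr rfl fun C _ => ?_
  obtain ⟨⟨S, P⟩, hC⟩ := C
  have hgood : Good12 src dst S P := ((iscyccoll_iff src dst S P).mp hC).1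
  show wt src dst x (S, P) = _
  rw [wt_of_good12 src dst x S P hgood, sign_neg_one_pow S P hgood.1]
end
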